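/- arXiv:2509.24942 — 4 statements merged into one kernel-verified Lean document; each statement's English description precedes it below -/
import Mathlib

section
/- Let x, y, q be complex numbers with |q| < 1, and suppose y·q^(2k+2) ≠ −1 for every integer k ≥ 0. Then Σ_{i,j≥0} x^i · y^j · q^(j²+j+2ij+i) / ((q²;q²)_i · (q²;q²)_j) = (−yq²;q²)_∞ · Σ_{i≥0} x^i · q^i / ((−yq²;q²)_i · (q²;q²)_i). -/
/-- Finite q-Pochhammer symbol `(a; q)_n = ∏_{k=0}^{n-1} (1 - a q^k)`. -/
noncomputable def qPoch (a q : ℂ) (n : ℕ) : ℂ := ∏ k ∈ Finset.range n, (1 - a * q ^ k)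

/-- Infinite q-Pochhammer symbol `(a; q)_∞ = ∏_{k=0}^{∞} (1 - a q^k)`. -/
noncomputable def qPochInf (a q : ℂ) : ℂ := ∏' k : ℕ, (1 - a * q ^ k)

open Complex Filter Finset Topology

lemma qPoch_zero (a q : ℂ) : qPoch a q 0 = 1 := by simp [qPoch]

lemma qPoch_succ (a q : ℂ) (n : ℕ) :
    qPoch a q (n + 1) = qPoch a q n * (1 - a * q ^ n) := Finset.prod_range_succ _ _

lemma qPoch_a_zero (q : ℂ) (n : ℕ) : qPoch 0 q n = 1 := by simp [qPoch]

lemma qPoch_add (a q : ℂ) (m n : ℕ) :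
    qPoch a q (m + n) = qPoch a q m * qPoch (a * q ^ m) q n := by
  unfold qPoch
  rw [Finset.prod_range_add]
  congr 1
  refine Finset.prod_congr rfl fun k _ => ?_
  rw [pow_add]; ring

lemma qPoch_ne_zero {a q : ℂ} (h : ∀ k, 1 - a * q ^ k ≠ 0) (n : ℕ) :
    qPoch a q n ≠ 0 :=
  Finset.prod_ne_zero_iff.mpr fun k _ => h k

lemma one_sub_ne_zero_of_norm_lt_one {w : ℂ} (h : ‖w‖ < 1) : 1 - w ≠ 0 := by
  intro h0
  rw [sub_eq_zero] at h0
  rw [← h0] at h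
  simp at h

lemma pochQQ_factor_ne_zero {q : ℂ} (hq : ‖q‖ < 1) (k : ℕ) : 1 - q * q ^ k ≠ 0 := by
  apply one_sub_ne_zero_of_norm_lt_one
  rw [norm_mul, norm_pow]
  calc ‖q‖ * ‖q‖ ^ k ≤ ‖q‖ * 1 := by
        gcongr
        exact pow_le_one₀ (norm_nonneg _) hq.le
    _ = ‖q‖ := by ring
    _ < 1 := hq

lemma norm_qPoch_le {a q : ℂ} (hq : ‖q‖ ≤ 1) (n : ℕ) :
    ‖qPoch a q n‖ ≤ (1 + ‖a‖) ^ n := by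
  rw [qPoch, norm_prod]
  calc ∏ k ∈ Finset.range n, ‖1 - a * q ^ k‖
      ≤ ∏ k ∈ Finset.range n, (1 + ‖a‖) := by
        apply Finset.prod_le_prod (fun k _ => norm_nonneg _)
        intro k _
        calc ‖1 - a * q ^ k‖ ≤ ‖(1 : ℂ)‖ + ‖a * q ^ k‖ := norm_sub_le _ _
          _ = 1 + ‖a‖ * ‖q‖ ^ k := by rw [norm_one, norm_mul, norm_pow]
          _ ≤ 1 + ‖a‖ * 1 := by
              gcongr
              exact pow_le_one₀ (norm_nonneg _) hq
          _ = 1 + ‖a‖ := by ring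
    _ = (1 + ‖a‖) ^ n := by rw [Finset.prod_const, Finset.card_range]

lemma norm_qPochQ_ge {q : ℂ} (hq : ‖q‖ < 1) (n : ℕ) :
    (1 - ‖q‖) ^ n ≤ ‖qPoch q q n‖ := by
  rw [qPoch, norm_prod]
  calc (1 - ‖q‖) ^ n = ∏ _k ∈ Finset.range n, (1 - ‖q‖) := by
        rw [Finset.prod_const, Finset.card_range]
    _ ≤ ∏ k ∈ Finset.range n, ‖1 - q * q ^ k‖ := by
        apply Finset.prod_le_prod (fun k _ => by linarith)
        intro k _
        calc 1 - ‖q‖ ≤ 1 - ‖q * q ^ k‖ := by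
              rw [norm_mul, norm_pow]
              have : ‖q‖ * ‖q‖ ^ k ≤ ‖q‖ * 1 := by
                gcongr; exact pow_le_one₀ (norm_nonneg _) hq.le
              linarith
          _ ≤ ‖1 - q * q ^ k‖ := by
              have := norm_sub_norm_le (1 : ℂ) (q * q ^ k)
              simpa using this

lemma pochQQ_ne_zero {q : ℂ} (hq : ‖q‖ < 1) (n : ℕ) : qPoch q q n ≠ 0 :=
  qPoch_ne_zero (pochQQ_factor_ne_zero hq) n

lemma logSummable {Q : ℂ} (hQ : ‖Q‖ < 1) (c : ℂ) :
    Summable (fun k : ℕ => Complex.log (1 - c * Q ^ k)) := by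
  have h0 : Tendsto (fun k : ℕ => c * Q ^ k) atTop (𝓝 0) := by
    simpa using (tendsto_pow_atTop_nhds_zero_of_norm_lt_one hQ).const_mul c
  have hev : ∀ᶠ k in atTop, ‖c * Q ^ k‖ ≤ 1 / 2 := by
    have := h0.eventually (Metric.ball_mem_nhds (0 : ℂ) (by norm_num : (0:ℝ) < 1/2))
    filter_upwards [this] with k hk
    simpa [dist_eq_norm] using hk.le
  apply Summable.of_norm_bounded_eventually_nat (g := fun k => 3 / 2 * (‖c‖ * ‖Q‖ ^ k))
  · exact ((summable_geometric_of_lt_one (norm_nonneg Q) hQ).mul_left ‖c‖).mul_left (3/2)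
  · filter_upwards [hev] with k hk
    have : (1 : ℂ) - c * Q ^ k = 1 + -(c * Q ^ k) := by ring
    rw [this]
    calc ‖Complex.log (1 + -(c * Q ^ k))‖ ≤ 3 / 2 * ‖-(c * Q ^ k)‖ :=
          Complex.norm_log_one_add_half_le_self (by simpa using hk)
      _ = 3 / 2 * (‖c‖ * ‖Q‖ ^ k) := by rw [norm_neg, norm_mul, norm_pow]

lemma qPochInf_eq_exp {Q : ℂ} (hQ : ‖Q‖ < 1) {c : ℂ} (hc : ∀ k, 1 - c * Q ^ k ≠ 0) :
    qPochInf c Q = Complex.exp (∑' k : ℕ, Complex.log (1 - c * Q ^ k)) := by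
  have h := Complex.cexp_tsum_eq_tprod (f := fun k => 1 - c * Q ^ k) hc (logSummable hQ c)
  exact h.symm

lemma qPochInf_ne_zero {Q : ℂ} (hQ : ‖Q‖ < 1) {c : ℂ} (hc : ∀ k, 1 - c * Q ^ k ≠ 0) :
    qPochInf c Q ≠ 0 := by
  rw [qPochInf_eq_exp hQ hc]; exact Complex.exp_ne_zero _

lemma qPochInf_multipliable {Q : ℂ} (hQ : ‖Q‖ < 1) {c : ℂ} (hc : ∀ k, 1 - c * Q ^ k ≠ 0) :
    Multipliable (fun k : ℕ => 1 - c * Q ^ k) :=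
  Complex.multipliable_of_summable_log (logSummable hQ c)

lemma qPoch_tendsto_qPochInf {Q : ℂ} (hQ : ‖Q‖ < 1) {c : ℂ} (hc : ∀ k, 1 - c * Q ^ k ≠ 0) :
    Tendsto (fun N => qPoch c Q N) atTop (𝓝 (qPochInf c Q)) := by
  simpa [qPoch, qPochInf, Function.comp_def] using (qPochInf_multipliable hQ hc).hasProd.comp tendsto_finset_range

lemma qPochInf_split {Q : ℂ} (hQ : ‖Q‖ < 1) {c : ℂ} (hc : ∀ k, 1 - c * Q ^ k ≠ 0) (i : ℕ) :
    qPochInf c Q = qPoch c Q i * qPochInf (c * Q ^ i) Q := by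
  have hc' : ∀ k, 1 - c * Q ^ i * Q ^ k ≠ 0 := fun k => by
    have := hc (k + i); rwa [pow_add, show c * (Q ^ k * Q ^ i) = c * Q ^ i * Q ^ k by ring] at this
  rw [qPochInf_eq_exp hQ hc, qPochInf_eq_exp hQ hc',
    ← Summable.sum_add_tsum_nat_add i (logSummable hQ c), Complex.exp_add]
  congr 1
  · rw [Complex.exp_sum]
    exact Finset.prod_congr rfl fun k _ => Complex.exp_log (hc k)
  · congr 1
    exact tsum_congr fun k => by rw [pow_add]; ring_nf

lemma qPochInf_tail_tendsto_one {Q : ℂ} (hQ : ‖Q‖ < 1) {c : ℂ}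
    (hc : ∀ k, 1 - c * Q ^ k ≠ 0) :
    Tendsto (fun i : ℕ => qPochInf (c * Q ^ i) Q) atTop (𝓝 1) := by
  have key : ∀ i : ℕ, qPochInf (c * Q ^ i) Q
      = Complex.exp (∑' k : ℕ, Complex.log (1 - c * Q ^ (k + i))) := by
    intro i
    have hc' : ∀ k, 1 - c * Q ^ i * Q ^ k ≠ 0 := fun k => by
      have := hc (k + i); rwa [pow_add, show c * (Q ^ k * Q ^ i) = c * Q ^ i * Q ^ k by ring] at this
    rw [qPochInf_eq_exp hQ hc']
    congr 1
    exact tsum_congr fun k => by rw [pow_add]; ring_nf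
  have h := (tendsto_sum_nat_add (fun k => Complex.log (1 - c * Q ^ k))).cexp
  rw [Complex.exp_zero] at h
  exact h.congr fun i => (key i).symm

/-- Gaussian binomial coefficients via the Pascal recurrence. -/
noncomputable def gb (Q : ℂ) : ℕ → ℕ → ℂ
  | 0, 0 => 1
  | 0, _ + 1 => 0
  | _ + 1, 0 => 1
  | N + 1, n + 1 => gb Q N (n + 1) + Q ^ (N - n) * gb Q N n

lemma gb_zero_right (Q : ℂ) (N : ℕ) : gb Q N 0 = 1 := by cases N <;> rfl

lemma gb_of_lt (Q : ℂ) : ∀ N n : ℕ, N < n → gb Q N n = 0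
  | 0, n + 1, _ => rfl
  | N + 1, n + 1, h => by
    rw [gb, gb_of_lt Q N (n + 1) (by omega), gb_of_lt Q N n (by omega)]
    ring

lemma gb_diag (Q : ℂ) : ∀ N : ℕ, gb Q N N = 1
  | 0 => rfl
  | N + 1 => by
    rw [gb, gb_of_lt Q N (N + 1) (by omega), gb_diag Q N]
    simp

lemma two_choose_two : ∀ j : ℕ, 2 * Nat.choose j 2 + j = j ^ 2
  | 0 => by simp
  | j + 1 => by
    have h : (j + 1) ^ 2 = j ^ 2 + 2 * j + 1 := by ring
    rw [Nat.choose_succ_succ, Nat.choose_one_right, h, ← two_choose_two j]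
    ring

lemma qbinom (Q z : ℂ) : ∀ N : ℕ,
    qPoch (-z) Q N = ∑ n ∈ Finset.range (N + 1), Q ^ (n.choose 2) * gb Q N n * z ^ n
  | 0 => by simp [qPoch, gb]
  | N + 1 => by
    rw [qPoch_succ, qbinom Q z N,
      Finset.sum_range_succ' (fun n => Q ^ (n.choose 2) * gb Q (N + 1) n * z ^ n) (N + 1)]
    have key : ∀ n ∈ Finset.range (N + 1),
        Q ^ ((n + 1).choose 2) * gb Q (N + 1) (n + 1) * z ^ (n + 1)
          = Q ^ ((n + 1).choose 2) * gb Q N (n + 1) * z ^ (n + 1)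
            + z * Q ^ N * (Q ^ (n.choose 2) * gb Q N n * z ^ n) := by
      intro n hn
      rw [Finset.mem_range] at hn
      have hn' : n ≤ N := by omega
      have hcs : (n + 1).choose 2 = n.choose 2 + n := by
        rw [Nat.choose_succ_succ, Nat.choose_one_right]; ring
      have hexp : (n + 1).choose 2 + (N - n) = N + n.choose 2 := by omega
      rw [gb]
      have : Q ^ ((n + 1).choose 2) * Q ^ (N - n) = Q ^ N * Q ^ (n.choose 2) := by
        rw [← pow_add, ← pow_add, hexp]
      calc Q ^ ((n + 1).choose 2) * (gb Q N (n + 1) + Q ^ (N - n) * gb Q N n) * z ^ (n + 1)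
          = Q ^ ((n + 1).choose 2) * gb Q N (n + 1) * z ^ (n + 1)
            + Q ^ ((n + 1).choose 2) * Q ^ (N - n) * gb Q N n * z ^ (n + 1) := by ring
        _ = _ := by rw [this]; ring
    rw [Finset.sum_congr rfl key, Finset.sum_add_distrib, ← Finset.mul_sum]
    have shift : ∑ n ∈ Finset.range (N + 1), Q ^ ((n + 1).choose 2) * gb Q N (n + 1) * z ^ (n + 1)
        = ∑ n ∈ Finset.range (N + 1), Q ^ (n.choose 2) * gb Q N n * z ^ n - 1 := by
      have h1 := Finset.sum_range_succ' (fun n => Q ^ (n.choose 2) * gb Q N n * z ^ n) (N + 1)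
      have h2 := Finset.sum_range_succ (fun n => Q ^ (n.choose 2) * gb Q N n * z ^ n) (N + 1)
      rw [gb_of_lt Q N (N + 1) (by omega)] at h2
      have h0 : Nat.choose 0 2 = 0 := rfl
      simp only [gb_zero_right, h0, pow_zero, mul_one, one_mul, mul_zero, zero_mul,
        add_zero] at h1 h2
      rw [h2] at h1
      linear_combination -h1
    rw [shift, gb_zero_right]
    have h0 : Nat.choose 0 2 = 0 := rfl
    rw [h0, pow_zero]
    ring

lemma gb_mul (Q : ℂ) : ∀ N n : ℕ, n ≤ N →
    qPoch Q Q n * qPoch Q Q (N - n) * gb Q N n = qPoch Q Q N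
  | 0, 0, _ => by simp [qPoch, gb]
  | N + 1, 0, _ => by simp [qPoch_zero, gb_zero_right]
  | N + 1, n + 1, h => by
    rcases Nat.lt_or_ge n N with hlt | hge
    · -- n + 1 ≤ N
      obtain ⟨m, rfl⟩ : ∃ m, N = m + 1 + n := ⟨N - n - 1, by omega⟩
      have IH1 := gb_mul Q (m + 1 + n) (n + 1) (by omega)
      have IH2 := gb_mul Q (m + 1 + n) n (by omega)
      rw [show m + 1 + n - (n + 1) = m from by omega] at IH1
      rw [show m + 1 + n - n = m + 1 from by omega] at IH2
      rw [gb, show m + 1 + n - n = m + 1 from by omega,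
        show m + 1 + n + 1 - (n + 1) = m + 1 from by omega]
      rw [qPoch_succ Q Q (m + 1 + n), qPoch_succ Q Q m, qPoch_succ Q Q n] at *
      have hpow : Q ^ (m + 1) = Q * Q ^ m := by rw [pow_succ]; ring
      have hpowN : Q ^ (m + 1 + n) = Q * Q ^ m * Q ^ n := by rw [pow_add, pow_succ]; ring
      rw [hpow, hpowN]
      linear_combination (1 - Q * Q ^ m) * IH1 + (Q * Q ^ m) * (1 - Q * Q ^ n) * IH2
    · -- n = N
      obtain rfl : n = N := by omega
      rw [gb, gb_of_lt Q n (n + 1) (by omega), gb_diag Q n,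
        show n + 1 - (n + 1) = 0 from by omega, qPoch_zero]
      simp

lemma gb_eq {Q : ℂ} (hQ : ‖Q‖ < 1) {N n : ℕ} (h : n ≤ N) :
    gb Q N n = qPoch (Q * Q ^ (N - n)) Q n / qPoch Q Q n := by
  have h1 := gb_mul Q N n h
  have h2 : qPoch Q Q N = qPoch Q Q (N - n) * qPoch (Q * Q ^ (N - n)) Q n := by
    have := qPoch_add Q Q (N - n) n
    rwa [show N - n + n = N from by omega] at this
  rw [h2] at h1
  have h3 : qPoch Q Q (N - n) ≠ 0 := pochQQ_ne_zero hQ _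
  have h4 : qPoch Q Q n ≠ 0 := pochQQ_ne_zero hQ _
  have h5 : gb Q N n * qPoch Q Q n = qPoch (Q * Q ^ (N - n)) Q n := by
    apply mul_left_cancel₀ h3
    linear_combination h1
  rw [eq_div_iff h4]
  exact h5

lemma norm_gb_le {Q : ℂ} (hQ : ‖Q‖ < 1) {N n : ℕ} (h : n ≤ N) :
    ‖gb Q N n‖ ≤ 2 ^ n / (1 - ‖Q‖) ^ n := by
  rw [gb_eq hQ h, norm_div]
  have hnum : ‖qPoch (Q * Q ^ (N - n)) Q n‖ ≤ 2 ^ n := by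
    calc ‖qPoch (Q * Q ^ (N - n)) Q n‖ ≤ (1 + ‖Q * Q ^ (N - n)‖) ^ n :=
          norm_qPoch_le hQ.le n
      _ ≤ 2 ^ n := by
          apply pow_le_pow_left₀ (by positivity)
          have : ‖Q * Q ^ (N - n)‖ ≤ 1 := by
            rw [norm_mul, norm_pow]
            calc ‖Q‖ * ‖Q‖ ^ (N - n) ≤ 1 * 1 := by
                  apply mul_le_mul hQ.le (pow_le_one₀ (norm_nonneg _) hQ.le)
                    (by positivity) zero_le_one
              _ = 1 := by ring
          linarith
  have hden : (1 - ‖Q‖) ^ n ≤ ‖qPoch Q Q n‖ := norm_qPochQ_ge hQ n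
  have hQ1 : (0:ℝ) < 1 - ‖Q‖ := by linarith
  apply div_le_div₀ (by positivity) hnum (by positivity) hden

lemma summable_aux {ρ : ℝ} (r : ℝ) (hρ0 : 0 ≤ ρ) (hρ : ρ < 1) (hr : 0 ≤ r) :
    Summable (fun n : ℕ => r ^ n * ρ ^ (n.choose 2)) := by
  apply summable_of_ratio_norm_eventually_le (r := 1/2) (by norm_num)
  have h0 : Tendsto (fun n : ℕ => r * ρ ^ n) atTop (𝓝 0) := by
    simpa using (tendsto_pow_atTop_nhds_zero_of_lt_one hρ0 hρ).const_mul r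
  have hev : ∀ᶠ n in atTop, r * ρ ^ n ≤ 1 / 2 := by
    have := h0.eventually (Metric.ball_mem_nhds (0 : ℝ) (by norm_num : (0:ℝ) < 1/2))
    filter_upwards [this] with n hn
    rw [Real.dist_eq, sub_zero] at hn
    calc r * ρ ^ n ≤ |r * ρ ^ n| := le_abs_self _
      _ ≤ 1/2 := hn.le
  filter_upwards [hev] with n hn
  have hcs : (n + 1).choose 2 = n.choose 2 + n := by
    rw [Nat.choose_succ_succ, Nat.choose_one_right]; ring
  have hnn : (0:ℝ) ≤ r ^ n * ρ ^ (n.choose 2) := by positivity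
  have e : r ^ (n + 1) * ρ ^ ((n + 1).choose 2) = r * ρ ^ n * (r ^ n * ρ ^ n.choose 2) := by
    rw [hcs]; ring
  rw [Real.norm_eq_abs, Real.norm_eq_abs, _root_.abs_of_nonneg (by positivity),
    _root_.abs_of_nonneg hnn, e]
  exact mul_le_mul_of_nonneg_right hn hnn

lemma euler {Q : ℂ} (hQ : ‖Q‖ < 1) {c : ℂ} (hc : ∀ k, 1 - c * Q ^ k ≠ 0) :
    HasSum (fun n : ℕ => Q ^ (n.choose 2) * (-c) ^ n / qPoch Q Q n) (qPochInf c Q) := by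
  have hQ1 : (0:ℝ) < 1 - ‖Q‖ := by linarith
  have hbs : Summable (fun n : ℕ =>
      ‖Q‖ ^ (n.choose 2) * (2 ^ n / (1 - ‖Q‖) ^ n) * ‖-c‖ ^ n) := by
    apply Summable.congr
      (summable_aux (ρ := ‖Q‖) (2 * ‖-c‖ / (1 - ‖Q‖)) (norm_nonneg Q) hQ (by positivity))
    intro n
    rw [div_pow, mul_pow]
    ring
  have hFsum : ∀ N : ℕ,
      ∑' n : ℕ, (if n ≤ N then Q ^ (n.choose 2) * gb Q N n * (-c) ^ n else 0)
        = qPoch c Q N := by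
    intro N
    rw [tsum_eq_sum (s := Finset.range (N + 1))
      (fun n hn => by rw [Finset.mem_range] at hn; rw [if_neg (by omega)])]
    have hqb := qbinom Q (-c) N
    rw [neg_neg] at hqb
    rw [hqb]
    refine Finset.sum_congr rfl fun n hn => ?_
    rw [Finset.mem_range] at hn
    rw [if_pos (by omega)]
  have hlim : ∀ n : ℕ,
      Tendsto (fun N => (if n ≤ N then Q ^ (n.choose 2) * gb Q N n * (-c) ^ n else 0)) atTop
        (𝓝 (Q ^ (n.choose 2) * (-c) ^ n / qPoch Q Q n)) := by
    intro n
    have hsub : Tendsto (fun N : ℕ => N - n) atTop atTop := tendsto_sub_atTop_nat n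
    have hc0 : Tendsto (fun N : ℕ => Q * Q ^ (N - n)) atTop (𝓝 0) := by
      have h1 : Tendsto (fun N : ℕ => Q ^ N) atTop (𝓝 0) :=
        tendsto_pow_atTop_nhds_zero_of_norm_lt_one hQ
      have := (h1.comp hsub).const_mul Q
      simpa using this
    have hcont : Continuous (fun a : ℂ => qPoch a Q n) := by
      unfold qPoch
      exact continuous_finset_prod _ fun k _ => by fun_prop
    have hten : Tendsto (fun N : ℕ => qPoch (Q * Q ^ (N - n)) Q n) atTop (𝓝 1) := by
      have := (hcont.tendsto 0).comp hc0
      rwa [qPoch_a_zero] at this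
    have hmul := hten.const_mul (Q ^ (n.choose 2) * (-c) ^ n / qPoch Q Q n)
    rw [mul_one] at hmul
    apply hmul.congr'
    filter_upwards [eventually_ge_atTop n] with N hN
    rw [if_pos hN, gb_eq hQ hN]
    have h4 : qPoch Q Q n ≠ 0 := pochQQ_ne_zero hQ n
    field_simp
  have hbound : ∀ N : ℕ, ∀ n : ℕ,
      ‖(if n ≤ N then Q ^ (n.choose 2) * gb Q N n * (-c) ^ n else 0)‖
        ≤ ‖Q‖ ^ (n.choose 2) * (2 ^ n / (1 - ‖Q‖) ^ n) * ‖-c‖ ^ n := by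
    intro N n
    by_cases h : n ≤ N
    · rw [if_pos h, norm_mul, norm_mul, norm_pow, norm_pow]
      gcongr
      exact norm_gb_le hQ h
    · rw [if_neg h, norm_zero]
      positivity
  have hdom := tendsto_tsum_of_dominated_convergence hbs hlim
    (Filter.Eventually.of_forall hbound)
  have h2 : Tendsto (fun N => qPoch c Q N) atTop (𝓝 (qPochInf c Q)) :=
    qPoch_tendsto_qPochInf hQ hc
  have heq : ∑' n : ℕ, Q ^ (n.choose 2) * (-c) ^ n / qPoch Q Q n = qPochInf c Q := by
    refine tendsto_nhds_unique ?_ h2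
    exact (Filter.Tendsto.congr hFsum hdom)
  have hsummable : Summable (fun n : ℕ => Q ^ (n.choose 2) * (-c) ^ n / qPoch Q Q n) := by
    apply Summable.of_norm_bounded hbs
    intro n
    rw [norm_div, norm_mul, norm_pow, norm_pow]
    have h4 : (1 - ‖Q‖) ^ n ≤ ‖qPoch Q Q n‖ := norm_qPochQ_ge hQ n
    have h5 : qPoch Q Q n ≠ 0 := pochQQ_ne_zero hQ n
    calc ‖Q‖ ^ (n.choose 2) * ‖-c‖ ^ n / ‖qPoch Q Q n‖
        ≤ ‖Q‖ ^ (n.choose 2) * ‖-c‖ ^ n / (1 - ‖Q‖) ^ n := by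
          gcongr
      _ = ‖Q‖ ^ (n.choose 2) * (1 / (1 - ‖Q‖) ^ n) * ‖-c‖ ^ n := by ring
      _ ≤ ‖Q‖ ^ (n.choose 2) * (2 ^ n / (1 - ‖Q‖) ^ n) * ‖-c‖ ^ n := by
          gcongr
          exact one_le_pow₀ one_le_two
  rw [← heq]
  exact hsummable.hasSum

theorem stmt_14 (x y q : ℂ) (hq : ‖q‖ < 1)
    (hy : ∀ k : ℕ, y * q ^ (2 * k + 2) ≠ -1) :
    (∑' p : ℕ × ℕ,
        x ^ p.1 * y ^ p.2 * q ^ (p.2 ^ 2 + p.2 + 2 * p.1 * p.2 + p.1) /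
          (qPoch (q ^ 2) (q ^ 2) p.1 * qPoch (q ^ 2) (q ^ 2) p.2))
      = qPochInf (-(y * q ^ 2)) (q ^ 2) *
        ∑' i : ℕ,
          x ^ i * q ^ i /
            (qPoch (-(y * q ^ 2)) (q ^ 2) i * qPoch (q ^ 2) (q ^ 2) i) := by
  set Q : ℂ := q ^ 2 with hQdef
  have hQ : ‖Q‖ < 1 := by
    rw [hQdef, norm_pow]
    exact pow_lt_one₀ (norm_nonneg q) hq two_ne_zero
  have hQ1 : (0:ℝ) < 1 - ‖Q‖ := by linarith
  have hfac : ∀ k : ℕ, 1 - -(y * Q) * Q ^ k ≠ 0 := by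
    intro k h0
    apply hy k
    have h1 : y * q ^ (2 * k + 2) = y * Q * Q ^ k := by
      rw [hQdef, pow_add, pow_mul]; ring
    rw [h1]
    linear_combination h0
  have hfaci : ∀ i k : ℕ, 1 - -(y * Q) * Q ^ i * Q ^ k ≠ 0 := by
    intro i k h0
    apply hfac (i + k)
    rw [pow_add]
    linear_combination h0
  have hterm : ∀ i j : ℕ,
      x ^ i * q ^ i / qPoch Q Q i * (Q ^ (j.choose 2) * (y * Q * Q ^ i) ^ j / qPoch Q Q j)
        = x ^ i * y ^ j * q ^ (j ^ 2 + j + 2 * i * j + i) / (qPoch Q Q i * qPoch Q Q j) := by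
    intro i j
    have hch : j ^ 2 + j + 2 * i * j + i = 2 * Nat.choose j 2 + 2 * j + 2 * (i * j) + i := by
      rw [← two_choose_two j]; ring
    rw [div_mul_div_comm, hch]
    congr 1
    rw [hQdef, pow_add, pow_add, pow_add, pow_mul, pow_mul, pow_mul]
    ring
  have hrow : ∀ i : ℕ, HasSum
      (fun j : ℕ => x ^ i * y ^ j * q ^ (j ^ 2 + j + 2 * i * j + i) /
        (qPoch Q Q i * qPoch Q Q j))
      (x ^ i * q ^ i / qPoch Q Q i * qPochInf (-(y * Q) * Q ^ i) Q) := by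
    intro i
    have h1 := (euler hQ (hfaci i)).mul_left (x ^ i * q ^ i / qPoch Q Q i)
    have h2 : (fun j : ℕ => x ^ i * q ^ i / qPoch Q Q i *
        (Q ^ (j.choose 2) * (- (-(y * Q) * Q ^ i)) ^ j / qPoch Q Q j))
        = fun j : ℕ => x ^ i * y ^ j * q ^ (j ^ 2 + j + 2 * i * j + i) /
          (qPoch Q Q i * qPoch Q Q j) := by
      funext j
      rw [show -(-(y * Q) * Q ^ i) = y * Q * Q ^ i from by ring]
      exact hterm i j
    rw [← h2]
    exact h1
  have hrhs : qPochInf (-(y * Q)) Q *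
      ∑' i : ℕ, x ^ i * q ^ i / (qPoch (-(y * Q)) Q i * qPoch Q Q i)
      = ∑' i : ℕ, x ^ i * q ^ i / qPoch Q Q i * qPochInf (-(y * Q) * Q ^ i) Q := by
    rw [← tsum_mul_left]
    apply tsum_congr
    intro i
    rw [qPochInf_split hQ hfac i]
    have hPi : qPoch (-(y * Q)) Q i ≠ 0 := qPoch_ne_zero hfac i
    have hpochi : qPoch Q Q i ≠ 0 := pochQQ_ne_zero hQ i
    field_simp
  rw [hrhs]
  by_cases hS : Summable (fun p : ℕ × ℕ =>
      x ^ p.1 * y ^ p.2 * q ^ (p.2 ^ 2 + p.2 + 2 * p.1 * p.2 + p.1) /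
        (qPoch Q Q p.1 * qPoch Q Q p.2))
  · rw [Summable.tsum_prod' hS (fun i => (hrow i).summable)]
    exact tsum_congr fun i => (hrow i).tsum_eq
  · rw [tsum_eq_zero_of_not_summable hS]
    rw [tsum_eq_zero_of_not_summable ?_]
    intro hsum
    apply hS
    -- tail products are eventually close to 1
    have hT1 : Tendsto (fun i : ℕ => qPochInf (-(y * Q) * Q ^ i) Q) atTop (𝓝 1) :=
      qPochInf_tail_tendsto_one hQ hfac
    have hev : ∀ᶠ i in atTop, (1:ℝ) / 2 ≤ ‖qPochInf (-(y * Q) * Q ^ i) Q‖ := by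
      have := hT1.eventually (Metric.ball_mem_nhds (1 : ℂ) (by norm_num : (0:ℝ) < 1/2))
      filter_upwards [this] with i hi
      rw [dist_eq_norm] at hi
      have h3 := norm_sub_norm_le (1 : ℂ) (qPochInf (-(y * Q) * Q ^ i) Q)
      rw [norm_one] at h3
      rw [norm_sub_rev] at hi
      linarith [hi.le]
    have hgsum : Summable (fun i : ℕ => ‖x ^ i * q ^ i / qPoch Q Q i‖) := by
      apply Summable.of_norm_bounded_eventually_nat
        (g := fun i => 2 * ‖x ^ i * q ^ i / qPoch Q Q i * qPochInf (-(y * Q) * Q ^ i) Q‖)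
      · exact (summable_norm_iff.mpr hsum).mul_left 2
      · filter_upwards [hev] with i hi
        rw [Real.norm_eq_abs, _root_.abs_of_nonneg (norm_nonneg _), norm_mul]
        nlinarith [norm_nonneg (x ^ i * q ^ i / qPoch Q Q i)]
    have hDsum : Summable (fun j : ℕ => ‖Q‖ ^ (j.choose 2) * ‖y * Q‖ ^ j / (1 - ‖Q‖) ^ j) := by
      apply Summable.congr
        (summable_aux (ρ := ‖Q‖) (‖y * Q‖ / (1 - ‖Q‖)) (norm_nonneg Q) hQ (by positivity))
      intro n
      rw [div_pow]
      ring
    apply Summable.of_norm_bounded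
      (Summable.mul_of_nonneg hgsum hDsum (fun i => norm_nonneg _)
        (fun j => by positivity))
    rintro ⟨i, j⟩
    simp only
    rw [← hterm i j]
    set gi : ℂ := x ^ i * q ^ i / qPoch Q Q i with hgi
    set w : ℂ := y * Q * Q ^ i with hw
    have h1 : ‖w ^ j‖ ≤ ‖y * Q‖ ^ j := by
      rw [norm_pow]
      apply pow_le_pow_left₀ (norm_nonneg _)
      rw [hw]
      calc ‖y * Q * Q ^ i‖ = ‖y * Q‖ * ‖Q‖ ^ i := by rw [norm_mul, norm_pow]
        _ ≤ ‖y * Q‖ * 1 := by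
            gcongr
            exact pow_le_one₀ (norm_nonneg _) hQ.le
        _ = ‖y * Q‖ := by ring
    have h2 : (1 - ‖Q‖) ^ j ≤ ‖qPoch Q Q j‖ := norm_qPochQ_ge hQ j
    have h3 : ‖Q ^ j.choose 2 * w ^ j / qPoch Q Q j‖
        ≤ ‖Q‖ ^ j.choose 2 * ‖y * Q‖ ^ j / (1 - ‖Q‖) ^ j := by
      rw [norm_div, norm_mul (Q ^ j.choose 2) (w ^ j), norm_pow Q (j.choose 2)]
      gcongr
    calc ‖gi * (Q ^ j.choose 2 * w ^ j / qPoch Q Q j)‖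
        = ‖gi‖ * ‖Q ^ j.choose 2 * w ^ j / qPoch Q Q j‖ := norm_mul _ _
      _ ≤ ‖gi‖ * (‖Q‖ ^ j.choose 2 * ‖y * Q‖ ^ j / (1 - ‖Q‖) ^ j) :=
          mul_le_mul_of_nonneg_left h3 (norm_nonneg gi)
end

section
/- Fix integers i, j ≥ 0 and n ≥ 0. The number of partitions λ of n into distinct odd parts with exactly i + 2j parts and with sol₂(λ) = i equals the number of pairs (μ, η) where μ is a partition with at most i parts all of which are even, η is a partition with at most j parts all of which are divisible by 4, and |μ| + |η| = n − (2i² + 4j² + 4ij − i). (In particular, the left-hand count is zero whenever n < 2i² + 4j² + 4ij − i.) -/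
/-- Helper for `sol2`: `sol2Go rest prev len` scans the rest of the (increasingly
sorted) list of parts, where `prev` is the previous part and `len` is the length of
the current maximal 2-sequence; it returns the number of maximal 2-sequences
(strings of parts with adjacent parts differing by exactly 2) of odd length. -/
def sol2Go : List ℕ → ℕ → ℕ → ℕ
  | [], _, len => len % 2
  | a :: rest, prev, len =>
      if a = prev + 2 then sol2Go rest a (len + 1)
      else len % 2 + sol2Go rest a 1

/-- `sol2 lam` is the number of maximal 2-sequences of odd length in the partition
(multiset of parts) `lam`, whose parts are listed in increasing order. -/
def sol2 (lam : Multiset ℕ) : ℕ :=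
  match Multiset.sort lam (· ≤ ·) with
  | [] => 0
  | a :: rest => sol2Go rest a 1

namespace S17

def half (a : ℕ) : ℕ := (a - 1) / 2

def toE : List ℕ → ℕ → List ℕ
  | [], _ => []
  | a :: rest, k => (a - k) :: toE rest (k + 1)

def fromE : List ℕ → ℕ → List ℕ
  | [], _ => []
  | v :: rest, k => (v + k) :: fromE rest (k + 1)

def orGo : List ℕ → ℕ → ℕ → ℕ
  | [], _, len => len % 2
  | a :: rest, prev, len =>
      if a = prev then orGo rest a (len + 1) else len % 2 + orGo rest a 1

def orc : List ℕ → ℕ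
  | [] => 0
  | a :: rest => orGo rest a 1

@[simp] lemma toE_nil (k : ℕ) : toE [] k = [] := rfl
@[simp] lemma toE_cons (a k : ℕ) (l : List ℕ) : toE (a :: l) k = (a - k) :: toE l (k+1) := rfl
@[simp] lemma fromE_nil (k : ℕ) : fromE [] k = [] := rfl
@[simp] lemma fromE_cons (v k : ℕ) (l : List ℕ) : fromE (v :: l) k = (v + k) :: fromE l (k+1) := rfl

@[simp] lemma fromE_length (t : List ℕ) : ∀ k, (fromE t k).length = t.length := by
  induction t with
  | nil => simp
  | cons v rest ih => intro k; simp [ih]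

@[simp] lemma toE_length (t : List ℕ) : ∀ k, (toE t k).length = t.length := by
  induction t with
  | nil => simp
  | cons v rest ih => intro k; simp [ih]

lemma fromE_sum (t : List ℕ) : ∀ k, 2 * (fromE t k).sum + t.length = 2 * t.sum + t.length * (2 * k + t.length) := by
  induction t with
  | nil => simp
  | cons v rest ih =>
    intro k
    simp only [fromE_cons, List.sum_cons, List.length_cons]
    have h1 := ih (k + 1)
    have h2 : (rest.length + 1) * (2 * k + (rest.length + 1))
        = rest.length * (2 * (k + 1) + rest.length) + 2 * k + 1 := by ring
    omega

lemma toE_fromE (t : List ℕ) : ∀ k, toE (fromE t k) k = t := by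
  induction t with
  | nil => simp
  | cons v rest ih => intro k; simp [ih]

lemma mem_fromE_ge (t : List ℕ) : ∀ k c, (∀ y ∈ t, c ≤ y) → ∀ x ∈ fromE t k, c + k ≤ x := by
  induction t with
  | nil => simp
  | cons v rest ih =>
    intro k c hc x hx
    simp only [fromE_cons, List.mem_cons] at hx
    rcases hx with rfl | hx
    · have := hc v (by simp); omega
    · have := ih (k+1) c (fun y hy => hc y (by simp [hy])) x hx; omega

lemma fromE_sorted (t : List ℕ) : ∀ k, t.Pairwise (· ≤ ·) → (fromE t k).Pairwise (· < ·) := by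
  induction t with
  | nil => simp
  | cons v rest ih =>
    intro k hs
    rw [List.pairwise_cons] at hs
    simp only [fromE_cons, List.pairwise_cons]
    refine ⟨fun b hb => ?_, ih (k+1) hs.2⟩
    have := mem_fromE_ge rest (k+1) v hs.1 b hb
    omega

lemma fromE_eq_of_mem (t : List ℕ) : ∀ k x, x ∈ fromE t k → ∃ y ∈ t, y ≤ x := by
  induction t with
  | nil => simp
  | cons v rest ih =>
    intro k x hx
    simp only [fromE_cons, List.mem_cons] at hx
    rcases hx with rfl | hx
    · exact ⟨v, by simp, by omega⟩
    · obtain ⟨y, hy, h⟩ := ih (k+1) x hx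
      exact ⟨y, by simp [hy], h⟩

lemma mem_toE_lb (l : List ℕ) : ∀ k c, l.Pairwise (· < ·) → (∀ y ∈ l, c ≤ y) → ∀ x ∈ toE l k, c - k ≤ x := by
  induction l with
  | nil => simp
  | cons y rest ih =>
    intro k c hs hc x hx
    rw [List.pairwise_cons] at hs
    simp only [toE_cons, List.mem_cons] at hx
    rcases hx with rfl | hx
    · have := hc y (by simp); omega
    · have := ih (k+1) (c+1) hs.2 (fun z hz => by have h1 := hs.1 z hz; have h2 := hc y (by simp); omega) x hx
      omega

lemma toE_sorted (l : List ℕ) : ∀ k, l.Pairwise (· < ·) → (∀ x ∈ l, k ≤ x) → (toE l k).Pairwise (· ≤ ·) := by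
  induction l with
  | nil => simp
  | cons a rest ih =>
    intro k hs hk
    rw [List.pairwise_cons] at hs
    simp only [toE_cons, List.pairwise_cons]
    constructor
    · intro b hb
      have := mem_toE_lb rest (k+1) (a+1) hs.2 (fun y hy => hs.1 y hy) b hb
      omega
    · exact ih (k+1) hs.2 (fun x hx => by have h1 := hs.1 x hx; have h2 := hk a (by simp); omega)

lemma fromE_toE (l : List ℕ) : ∀ k, l.Pairwise (· < ·) → (∀ x ∈ l, k ≤ x) → fromE (toE l k) k = l := by
  induction l with
  | nil => simp
  | cons a rest ih =>
    intro k hs hk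
    rw [List.pairwise_cons] at hs
    simp only [toE_cons, fromE_cons]
    have ha : k ≤ a := hk a (by simp)
    rw [Nat.sub_add_cancel ha, ih (k+1) hs.2 (fun x hx => by have := hs.1 x hx; omega)]


@[simp] lemma orGo_nil (prev len : ℕ) : orGo [] prev len = len % 2 := rfl
lemma orGo_cons (a : ℕ) (rest : List ℕ) (prev len : ℕ) :
    orGo (a :: rest) prev len = if a = prev then orGo rest a (len + 1) else len % 2 + orGo rest a 1 := rfl
lemma sol2Go_cons (a : ℕ) (rest : List ℕ) (prev len : ℕ) :
    sol2Go (a :: rest) prev len = if a = prev + 2 then sol2Go rest a (len + 1)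
      else len % 2 + sol2Go rest a 1 := rfl

lemma sol2Go_eq (rest : List ℕ) : ∀ prev k len, (∀ x ∈ rest, Odd x) →
    List.Chain' (· < ·) (prev :: rest) → Odd prev → 2 * k + 1 ≤ prev →
    sol2Go rest prev len = orGo (toE (rest.map half) (k + 1)) (half prev - k) len := by
  induction rest with
  | nil => intros; rfl
  | cons a r ih =>
    intro prev k len hodd hch hprev hk
    have hpa : prev < a := (List.isChain_cons_cons.mp hch).1
    have hcha : List.Chain' (· < ·) (a :: r) := (List.isChain_cons_cons.mp hch).2
    have hoa : Odd a := hodd a (by simp)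
    have hoa' : a % 2 = 1 := Nat.odd_iff.mp hoa
    have hop' : prev % 2 = 1 := Nat.odd_iff.mp hprev
    have hcond : (a = prev + 2) ↔ (half a - (k + 1) = half prev - k) := by
      simp only [half]; omega
    have hka : 2 * (k + 1) + 1 ≤ a := by omega
    have ihx := fun len => ih a (k + 1) len (fun x hx => hodd x (by simp [hx])) hcha hoa hka
    simp only [List.map_cons, toE_cons, sol2Go_cons, orGo_cons]
    by_cases h : a = prev + 2
    · rw [if_pos h, if_pos ((hcond.mp h)), ihx (len + 1)]
    · rw [if_neg h, if_neg (fun hc => h (hcond.mpr hc)), ihx 1]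

lemma card_filter_odd_cons (a : ℕ) (rest : List ℕ) :
    ((a :: rest).toFinset.filter fun v => Odd ((a :: rest).count v)).card
      = (1 + rest.count a) % 2 + ((rest.toFinset.erase a).filter fun v => Odd (rest.count v)).card := by
  classical
  have h1 : (a :: rest).toFinset = insert a (rest.toFinset.erase a) := by
    ext x; simp [List.mem_toFinset, Finset.mem_insert, Finset.mem_erase]
    constructor
    · rintro (rfl | hx); · exact Or.inl rfl
      by_cases hxa : x = a; · exact Or.inl hxa
      · exact Or.inr ⟨hxa, hx⟩
    · rintro (rfl | ⟨_, hx⟩); · simp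
      · simp [hx]
  rw [h1, Finset.filter_insert]
  have hcount : ∀ v ∈ rest.toFinset.erase a, (a :: rest).count v = rest.count v := by
    intro v hv
    have : v ≠ a := (Finset.mem_erase.mp hv).1
    simp [List.count_cons, this, Ne.symm this]
  have hfc : (rest.toFinset.erase a).filter (fun v => Odd ((a :: rest).count v))
      = (rest.toFinset.erase a).filter (fun v => Odd (rest.count v)) := by
    apply Finset.filter_congr
    intro v hv; rw [hcount v hv]
  have hca : (a :: rest).count a = 1 + rest.count a := by simp [List.count_cons]; omega
  by_cases h : Odd ((a :: rest).count a)
  · rw [if_pos h, Finset.card_insert_of_notMem (by simp [Finset.mem_filter]), hfc]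
    have : (1 + rest.count a) % 2 = 1 := by rw [← hca]; exact Nat.odd_iff.mp h
    omega
  · rw [if_neg h, hfc]
    have : (1 + rest.count a) % 2 = 0 := by
      rw [← hca]; have := Nat.odd_iff.not.mp h; omega
    omega

lemma orGo_eq (t : List ℕ) : ∀ prev len, t.Pairwise (· ≤ ·) → (∀ x ∈ t, prev ≤ x) →
    orGo t prev len = (len + t.count prev) % 2
      + ((t.toFinset.erase prev).filter fun v => Odd (t.count v)).card := by
  classical
  induction t with
  | nil => simp
  | cons a rest ih =>
    intro prev len hs hp
    rw [List.pairwise_cons] at hs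
    by_cases h : a = prev
    · subst h
      rw [orGo_cons, if_pos rfl, ih a (len + 1) hs.2 hs.1]
      have h2 : (a :: rest).toFinset.erase a = rest.toFinset.erase a := by
        ext x
        by_cases hx : x = a <;> simp [hx]
      have h3 : ∀ v ∈ rest.toFinset.erase a, (a :: rest).count v = rest.count v := by
        intro v hv; have : v ≠ a := (Finset.mem_erase.mp hv).1; simp [List.count_cons, this, Ne.symm this]
      have hfc : ((a :: rest).toFinset.erase a).filter (fun v => Odd ((a :: rest).count v))
          = (rest.toFinset.erase a).filter (fun v => Odd (rest.count v)) := by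
        rw [h2]; exact Finset.filter_congr (fun v hv => by rw [h3 v hv])
      rw [hfc]
      have : (a :: rest).count a = rest.count a + 1 := by simp [List.count_cons]
      omega
    · have hprev : prev ∉ (a :: rest) := by
        intro hmem
        rcases List.mem_cons.mp hmem with rfl | hmem
        · exact h rfl
        · have h1 := hs.1 prev hmem
          have h2 := hp a (by simp)
          have h3 := hp prev (by simp [hmem])
          exact h (le_antisymm h1 (by omega))
      have hc0 : (a :: rest).count prev = 0 := List.count_eq_zero.mpr hprev
      have herase : (a :: rest).toFinset.erase prev = (a :: rest).toFinset :=
        Finset.erase_eq_of_notMem (by simp [List.mem_toFinset]; tauto)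
      rw [orGo_cons, if_neg (fun hc => h hc), ih a 1 hs.2 hs.1, herase, hc0,
        card_filter_odd_cons]
      omega

lemma orc_eq (t : List ℕ) (hs : t.Pairwise (· ≤ ·)) :
    orc t = (t.toFinset.filter fun v => Odd (t.count v)).card := by
  classical
  cases t with
  | nil => simp [orc]
  | cons a rest =>
    rw [List.pairwise_cons] at hs
    show orGo rest a 1 = _
    rw [orGo_eq rest a 1 hs.2 hs.1, card_filter_odd_cons]

/-- sorting toolkit -/
lemma sort_coe (l : List ℕ) (h : l.Pairwise (· ≤ ·)) : Multiset.sort (↑l : Multiset ℕ) (· ≤ ·) = l := by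
  have hperm : (Multiset.sort (↑l : Multiset ℕ) (· ≤ ·)).Perm l :=
    Multiset.coe_eq_coe.mp (Multiset.sort_eq (↑l : Multiset ℕ) (· ≤ ·))
  exact List.Perm.eq_of_pairwise' (Multiset.pairwise_sort _ _) h hperm

lemma sorted_lt_of_le_nodup {l : List ℕ} (h : l.Pairwise (· ≤ ·)) (hn : l.Nodup) :
    l.Pairwise (· < ·) := by
  have := List.Pairwise.and h hn
  exact this.imp (fun h => lt_of_le_of_ne h.1 h.2)

lemma sorted_le_of_lt {l : List ℕ} (h : l.Pairwise (· < ·)) : l.Pairwise (· ≤ ·) :=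
  h.imp le_of_lt


lemma sol2_eq (lam : Multiset ℕ) (l : List ℕ) (hl : Multiset.sort lam (· ≤ ·) = l)
    (hodd : ∀ x ∈ l, Odd x) (hs : l.Pairwise (· < ·)) :
    sol2 lam = orc (toE (l.map half) 0) := by
  cases l with
  | nil => rw [sol2, hl]; rfl
  | cons a rest =>
    rw [sol2, hl]
    show sol2Go rest a 1 = orc (toE ((a :: rest).map half) 0)
    have h1 : orc (toE ((a :: rest).map half) 0) = orGo (toE (rest.map half) 1) (half a - 0) 1 := rfl
    rw [h1, sol2Go_eq rest a 0 1 (fun x hx => hodd x (by simp [hx]))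
      (List.isChain_iff_pairwise.mpr hs) (hodd a (by simp))
      (by have := Nat.odd_iff.mp (hodd a (by simp)); omega)]

def oddF (c : Multiset ℕ) : Finset ℕ := c.toFinset.filter fun v => Odd (c.count v)

def half2 (c : Multiset ℕ) : Multiset ℕ := ∑ v ∈ c.toFinset, Multiset.replicate (c.count v / 2) v

def recon (s : Finset ℕ) (X : Multiset ℕ) : Multiset ℕ := s.val + (X + X)

lemma count_half2 (c : Multiset ℕ) (w : ℕ) : (half2 c).count w = c.count w / 2 := by
  classical
  rw [half2]
  rw [Multiset.count_sum']
  rw [Finset.sum_congr rfl (fun v _ => Multiset.count_replicate w v _)]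
  simp only [Finset.sum_ite_eq']
  by_cases h : w ∈ c.toFinset
  · rw [if_pos h]
  · rw [if_neg h, Multiset.count_eq_zero_of_notMem (by simpa using h)]
    rfl

lemma count_recon (s : Finset ℕ) (X : Multiset ℕ) (v : ℕ) :
    (recon s X).count v = (if v ∈ s then 1 else 0) + 2 * X.count v := by
  classical
  rw [recon]
  simp only [Multiset.count_add]
  have : s.val.count v = if v ∈ s then 1 else 0 := by
    by_cases h : v ∈ s
    · rw [if_pos h, Multiset.count_eq_one_of_mem s.nodup h]
    · rw [if_neg h, Multiset.count_eq_zero.mpr h]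
  omega


lemma mem_oddF (c : Multiset ℕ) (v : ℕ) : v ∈ oddF c ↔ Odd (c.count v) := by
  classical
  rw [oddF, Finset.mem_filter]
  constructor
  · exact fun h => h.2
  · intro h
    refine ⟨Multiset.mem_toFinset.mpr ?_, h⟩
    rw [← Multiset.count_pos]
    rcases h with ⟨m, hm⟩; omega

lemma recon_eq (c : Multiset ℕ) : recon (oddF c) (half2 c) = c := by
  classical
  ext v
  rw [count_recon, count_half2]
  by_cases h : Odd (c.count v)
  · rw [if_pos ((mem_oddF c v).mpr h)]
    rw [Nat.odd_iff] at h; omega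
  · rw [if_neg (fun hm => h ((mem_oddF c v).mp hm))]
    rw [Nat.odd_iff] at h; omega

lemma oddF_recon (s : Finset ℕ) (X : Multiset ℕ) : oddF (recon s X) = s := by
  classical
  ext v
  rw [mem_oddF, count_recon, Nat.odd_iff]
  by_cases h : v ∈ s <;> simp [h] <;> omega

lemma half2_recon (s : Finset ℕ) (X : Multiset ℕ) : half2 (recon s X) = X := by
  classical
  ext v
  rw [count_half2, count_recon]
  by_cases h : v ∈ s <;> simp [h] <;> omega

lemma card_recon (s : Finset ℕ) (X : Multiset ℕ) :
    Multiset.card (recon s X) = s.card + 2 * Multiset.card X := by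
  rw [recon]
  simp only [Multiset.card_add, Finset.card]
  omega

lemma sum_recon (s : Finset ℕ) (X : Multiset ℕ) :
    (recon s X).sum = s.val.sum + 2 * X.sum := by
  rw [recon]
  simp only [Multiset.sum_add]
  omega


def odds (u : List ℕ) : List ℕ := u.map (fun x => 2 * x + 1)

lemma map_half_odds (u : List ℕ) : (odds u).map half = u := by
  rw [odds, List.map_map]
  have : (half ∘ fun x => 2 * x + 1) = id := by
    funext x; simp only [half, Function.comp, id]; omega
  rw [this, List.map_id]

lemma odds_map_half (l : List ℕ) (hodd : ∀ x ∈ l, Odd x) : odds (l.map half) = l := by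
  rw [odds, List.map_map]
  have : ∀ x ∈ l, ((fun x => 2 * x + 1) ∘ half) x = id x := by
    intro x hx
    have := Nat.odd_iff.mp (hodd x hx)
    simp [half, Function.comp]; omega
  rw [List.map_congr_left this, List.map_id]

lemma odds_sum (u : List ℕ) : (odds u).sum = 2 * u.sum + u.length := by
  induction u with
  | nil => rfl
  | cons v r ih => simp [odds, List.sum_cons] at ih ⊢; omega

@[simp] lemma odds_length (u : List ℕ) : (odds u).length = u.length := by simp [odds]

lemma odds_sorted (u : List ℕ) (h : u.Pairwise (· < ·)) : (odds u).Pairwise (· < ·) := by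
  rw [odds, List.pairwise_map]
  exact h.imp (fun hab => by omega)

lemma odds_odd (u : List ℕ) : ∀ x ∈ odds u, Odd x := by
  intro x hx
  rw [odds, List.mem_map] at hx
  obtain ⟨y, _, rfl⟩ := hx
  exact ⟨y, by ring⟩

lemma map_half_sorted (l : List ℕ) (hodd : ∀ x ∈ l, Odd x) (hs : l.Pairwise (· < ·)) :
    (l.map half).Pairwise (· < ·) := by
  rw [List.pairwise_map]
  exact hs.imp_of_mem (fun ha hb hab => by
    have h1 := Nat.odd_iff.mp (hodd _ ha)
    have h2 := Nat.odd_iff.mp (hodd _ hb)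
    simp only [half]; omega)

lemma oddF_coe (t : List ℕ) : oddF ↑t = t.toFinset.filter fun v => Odd (t.count v) := by
  classical
  rw [oddF]
  apply Finset.filter_congr
  intro v _
  rw [Multiset.coe_count]

/-- the list is recovered from its toE image -/
lemma sum_odds_fromE (t : List ℕ) : (odds (fromE t 0)).sum = 2 * t.sum + t.length * t.length := by
  have h1 := fromE_sum t 0
  norm_num at h1
  have h2 := odds_sum (fromE t 0)
  have h3 := fromE_length t 0
  omega

def TA (i j n : ℕ) := {lam : Multiset ℕ //
        lam.sum = n ∧ (∀ p ∈ lam, Odd p) ∧ lam.Nodup ∧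
        Multiset.card lam = i + 2 * j ∧ sol2 lam = i}

def TB (i j n : ℕ) := {c : Multiset ℕ //
        Multiset.card c = i + 2 * j ∧ (oddF c).card = i ∧
        2 * c.sum + (i + 2 * j) * (i + 2 * j) = n}

def eqAB (i j n : ℕ) : TA i j n ≃ TB i j n := by
  refine ⟨fun a => ⟨↑(toE ((Multiset.sort a.val (· ≤ ·)).map half) 0), ?_⟩,
          fun b => ⟨↑(odds (fromE (Multiset.sort b.val (· ≤ ·)) 0)), ?_⟩, ?_, ?_⟩
  · -- forward props
    obtain ⟨lam, hsum, hodd, hnd, hcard, hsol⟩ := a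
    set l := Multiset.sort lam (· ≤ ·) with hl
    have hcoe : (↑l : Multiset ℕ) = lam := Multiset.sort_eq _ _
    have hle : l.Pairwise (· ≤ ·) := Multiset.pairwise_sort _ _
    have hnl : l.Nodup := Multiset.coe_nodup.mp (hcoe ▸ hnd)
    have hlt : l.Pairwise (· < ·) := sorted_lt_of_le_nodup hle hnl
    have hol : ∀ x ∈ l, Odd x := fun x hx => hodd x (hcoe ▸ Multiset.mem_coe.mpr hx)
    have hhs : (l.map half).Pairwise (· < ·) := map_half_sorted l hol hlt
    have hrec : odds (fromE (toE (l.map half) 0) 0) = l := by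
      rw [fromE_toE (l.map half) 0 hhs (fun x _ => Nat.zero_le x), odds_map_half l hol]
    set t := toE (l.map half) 0 with ht
    have hts : t.Pairwise (· ≤ ·) := toE_sorted _ 0 hhs (fun x _ => Nat.zero_le x)
    have hlen : t.length = i + 2 * j := by
      rw [ht, toE_length, List.length_map, hl, Multiset.length_sort, hcard]
    have hlsum : l.sum = n := by rw [← Multiset.sum_coe, hcoe, hsum]
    refine ⟨by rw [Multiset.coe_card, hlen], ?_, ?_⟩
    · rw [oddF_coe, ← orc_eq t hts, ← sol2_eq lam l hl.symm hol hlt, hsol]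
    · have h1 := sum_odds_fromE t
      rw [hrec] at h1
      have h2 : (t.map half).length = t.length := List.length_map _
      rw [Multiset.sum_coe]
      rw [hlen] at h1
      omega
  · -- backward props
    obtain ⟨c, hc, hoddc, hsumc⟩ := b
    set t := Multiset.sort c (· ≤ ·) with ht
    have hcoe : (↑t : Multiset ℕ) = c := Multiset.sort_eq _ _
    have hts : t.Pairwise (· ≤ ·) := Multiset.pairwise_sort _ _
    set l := odds (fromE t 0) with hldef
    have hlt : l.Pairwise (· < ·) := odds_sorted _ (fromE_sorted t 0 hts)
    have hol : ∀ x ∈ l, Odd x := odds_odd _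
    have hsl : Multiset.sort (↑l : Multiset ℕ) (· ≤ ·) = l := sort_coe l (sorted_le_of_lt hlt)
    have hlen : t.length = i + 2 * j := by rw [ht, Multiset.length_sort, hc]
    have hsum : l.sum = 2 * t.sum + t.length * t.length := sum_odds_fromE t
    have htsum : t.sum = c.sum := by rw [← hcoe, Multiset.sum_coe]
    refine ⟨?_, ?_, ?_, ?_, ?_⟩
    · rw [Multiset.sum_coe, hsum, hlen, htsum]; omega
    · intro p hp; exact hol p (Multiset.mem_coe.mp hp)
    · exact Multiset.coe_nodup.mpr hlt.nodup
    · rw [Multiset.coe_card, hldef, odds_length, fromE_length, hlen]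
    · rw [sol2_eq (↑l) l hsl hol hlt, hldef, map_half_odds,
        toE_fromE t 0, orc_eq t hts, ← oddF_coe, hcoe, hoddc]
  · -- left inverse
    rintro ⟨lam, hsum, hodd, hnd, hcard, hsol⟩
    apply Subtype.ext
    show (↑(odds (fromE (Multiset.sort (↑(toE (((Multiset.sort lam (· ≤ ·))).map half) 0) : Multiset ℕ) (· ≤ ·)) 0)) : Multiset ℕ) = lam
    set l := Multiset.sort lam (· ≤ ·) with hl
    have hcoe : (↑l : Multiset ℕ) = lam := Multiset.sort_eq _ _
    have hle : l.Pairwise (· ≤ ·) := Multiset.pairwise_sort _ _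
    have hnl : l.Nodup := Multiset.coe_nodup.mp (hcoe ▸ hnd)
    have hlt : l.Pairwise (· < ·) := sorted_lt_of_le_nodup hle hnl
    have hol : ∀ x ∈ l, Odd x := fun x hx => hodd x (hcoe ▸ Multiset.mem_coe.mpr hx)
    have hhs : (l.map half).Pairwise (· < ·) := map_half_sorted l hol hlt
    have hts : (toE (l.map half) 0).Pairwise (· ≤ ·) := toE_sorted _ 0 hhs (fun x _ => Nat.zero_le x)
    rw [sort_coe _ hts, fromE_toE (l.map half) 0 hhs (fun x _ => Nat.zero_le x),
      odds_map_half l hol, hcoe]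
  · -- right inverse
    rintro ⟨c, hc, hoddc, hsumc⟩
    apply Subtype.ext
    show (↑(toE (((Multiset.sort (↑(odds (fromE (Multiset.sort c (· ≤ ·)) 0)) : Multiset ℕ) (· ≤ ·))).map half) 0) : Multiset ℕ) = c
    set t := Multiset.sort c (· ≤ ·) with ht
    have hcoe : (↑t : Multiset ℕ) = c := Multiset.sort_eq _ _
    have hts : t.Pairwise (· ≤ ·) := Multiset.pairwise_sort _ _
    have hlt : (odds (fromE t 0)).Pairwise (· < ·) := odds_sorted _ (fromE_sorted t 0 hts)
    rw [sort_coe _ (sorted_le_of_lt hlt), map_half_odds, toE_fromE t 0, hcoe]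


def TB2 (i j n : ℕ) := {p : Finset ℕ × Multiset ℕ //
    p.1.card = i ∧ Multiset.card p.2 = j ∧
    2 * (p.1.val.sum + 2 * p.2.sum) + (i + 2 * j) * (i + 2 * j) = n}

def eqBB2 (i j n : ℕ) : TB i j n ≃ TB2 i j n := by
  refine ⟨fun b => ⟨(oddF b.val, half2 b.val), ?_⟩, fun p => ⟨recon p.val.1 p.val.2, ?_⟩, ?_, ?_⟩
  · obtain ⟨c, hc, hodd, hsum⟩ := b
    dsimp only
    have h1 := card_recon (oddF c) (half2 c)
    have h2 := sum_recon (oddF c) (half2 c)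
    rw [recon_eq] at h1 h2
    exact ⟨hodd, by omega, by omega⟩
  · obtain ⟨⟨s, X⟩, h1, h2, h3⟩ := p
    dsimp only at h1 h2 h3 ⊢
    have hcr := card_recon s X
    have hsr := sum_recon s X
    have hor := oddF_recon s X
    exact ⟨by omega, by rw [hor, h1], by omega⟩
  · rintro ⟨c, hc, hodd, hsum⟩
    exact Subtype.ext (recon_eq c)
  · rintro ⟨⟨s, X⟩, h1, h2, h3⟩
    apply Subtype.ext
    show (oddF (recon s X), half2 (recon s X)) = (s, X)
    rw [oddF_recon, half2_recon]


lemma count0_filter_length (t : List ℕ) :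
    t.count 0 + (t.filter (fun x => x ≠ 0)).length = t.length := by
  induction t with
  | nil => simp
  | cons a r ih =>
    by_cases h : a = 0 <;>
      simp only [List.count_cons, List.filter_cons, h, ne_eq, decide_not] at ih ⊢ <;>
      simp [h] <;> omega

lemma filter_sum (t : List ℕ) : (t.filter (fun x => x ≠ 0)).sum = t.sum := by
  induction t with
  | nil => simp
  | cons a r ih =>
    by_cases h : a = 0 <;>
      simp only [List.count_cons, List.filter_cons, h, ne_eq, decide_not] at ih ⊢ <;>
      simp [h] <;> omega

lemma replicate_zero_append (t : List ℕ) (hs : t.Pairwise (· ≤ ·)) :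
    List.replicate (t.count 0) 0 ++ t.filter (fun x => x ≠ 0) = t := by
  induction t with
  | nil => simp
  | cons a r ih =>
    rw [List.pairwise_cons] at hs
    by_cases h : a = 0
    · subst h
      have hc : List.count 0 (0 :: r) = r.count 0 + 1 := by simp [List.count_cons]
      have hf : (0 :: r).filter (fun x => x ≠ 0) = r.filter (fun x => x ≠ 0) := by
        rw [List.filter_cons, if_neg (by simp)]
      rw [hc, hf, List.replicate_succ, List.cons_append, ih hs.2]
    · have h0 : r.count 0 = 0 := by
        rw [List.count_eq_zero]
        intro hmem
        have := hs.1 0 hmem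
        omega
      have hc : List.count 0 (a :: r) = 0 := by
        rw [List.count_cons, h0]; simp [h]
      rw [hc]
      show (a :: r).filter (fun x => x ≠ 0) = a :: r
      rw [List.filter_eq_self]
      intro b hb
      rcases List.mem_cons.mp hb with rfl | hb
      · simpa using h
      · have h1 := hs.1 b hb
        have hb0 : b ≠ 0 := by
          intro hb0; subst hb0
          rw [List.count_eq_zero] at h0; exact h0 hb
        simpa using hb0

lemma sorted_replicate_append (k : ℕ) (l : List ℕ) (hl : l.Pairwise (· ≤ ·)) :
    (List.replicate k 0 ++ l).Pairwise (· ≤ ·) := by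
  rw [List.pairwise_append]
  refine ⟨?_, hl, ?_⟩
  · induction k with
    | zero => simp
    | succ m ih => 
      rw [List.replicate_succ, List.pairwise_cons]
      exact ⟨fun b hb => Nat.zero_le b, ih⟩
  · intro a ha b _
    rw [List.eq_of_mem_replicate ha]
    exact Nat.zero_le b

lemma filter_replicate_zero (k : ℕ) :
    (List.replicate k (0:ℕ)).filter (fun x => x ≠ 0) = [] := by
  induction k with
  | zero => rfl
  | succ m ih => rw [List.replicate_succ, List.filter_cons]; simpa using ih

lemma sort_toFinset_self (l : List ℕ) (h : l.Pairwise (· < ·)) :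
    l.toFinset.sort (· ≤ ·) = l := by
  have h1 : l.toFinset.val = (↑l.dedup : Multiset ℕ) := rfl
  have h2 : l.dedup = l := List.dedup_eq_self.mpr h.nodup
  show Multiset.sort l.toFinset.val _ = l
  rw [h1, h2, sort_coe l (sorted_le_of_lt h)]


lemma sum_map_two (l : List ℕ) : (l.map (fun x => 2 * x)).sum = 2 * l.sum := by
  induction l with
  | nil => rfl
  | cons a r ih => simp only [List.map_cons, List.sum_cons, ih]; ring

def fwdS (s : Finset ℕ) : Multiset ℕ :=
  ↑(((toE (s.sort (· ≤ ·)) 0).filter (fun x => x ≠ 0)).map (fun x => 2 * x))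

def bwdS (i : ℕ) (μ : Multiset ℕ) : Finset ℕ :=
  (fromE (List.replicate (i - Multiset.card μ) 0
    ++ Multiset.sort (μ.map (· / 2)) (· ≤ ·)) 0).toFinset

lemma fwdS_mem (s : Finset ℕ) : ∀ x ∈ fwdS s, 0 < x ∧ 2 ∣ x := by
  intro x hx
  rw [fwdS, Multiset.mem_coe, List.mem_map] at hx
  obtain ⟨y, hy, rfl⟩ := hx
  have : y ≠ 0 := by
    have := List.of_mem_filter hy
    simpa using this
  omega

lemma fwdS_card (s : Finset ℕ) : Multiset.card (fwdS s) ≤ s.card := by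
  rw [fwdS, Multiset.coe_card, List.length_map]
  calc ((toE (s.sort (· ≤ ·)) 0).filter (fun x => x ≠ 0)).length
      ≤ (toE (s.sort (· ≤ ·)) 0).length := List.length_filter_le _ _
    _ = s.card := by rw [toE_length, Finset.length_sort]

lemma fwdS_sum (s : Finset ℕ) :
    (fwdS s).sum + (s.card * s.card - s.card) = 2 * s.val.sum := by
  set ls := s.sort (· ≤ ·) with hls
  have hlt : ls.Pairwise (· < ·) := List.sortedLT_iff_pairwise.mp (Finset.sortedLT_sort s)
  set e := toE ls 0 with he
  have hrec : fromE e 0 = ls := fromE_toE ls 0 hlt (fun x _ => Nat.zero_le x)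
  have h1 := fromE_sum e 0
  rw [hrec] at h1
  norm_num at h1
  have hlen : e.length = s.card := by rw [he, toE_length, hls, Finset.length_sort]
  have h2 : (fwdS s).sum = 2 * e.sum := by
    rw [fwdS, Multiset.sum_coe, sum_map_two, filter_sum]
  have h3 : ls.sum = s.val.sum := by
    rw [← Multiset.sum_coe, hls, Finset.sort_eq]
  rw [hlen] at h1
  have hge : s.card ≤ s.card * s.card := by
    rcases Nat.eq_zero_or_pos s.card with h | h
    · simp [h]
    · exact Nat.le_mul_of_pos_left _ h
  omega

lemma bwdS_card (i : ℕ) (μ : Multiset ℕ) (hcard : Multiset.card μ ≤ i) :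
    (bwdS i μ).card = i := by
  set lX := Multiset.sort (μ.map (· / 2)) (· ≤ ·) with hlX
  set t := List.replicate (i - Multiset.card μ) 0 ++ lX with ht
  have hts : t.Pairwise (· ≤ ·) := sorted_replicate_append _ _ (Multiset.pairwise_sort _ _)
  have hlt : (fromE t 0).Pairwise (· < ·) := fromE_sorted t 0 hts
  rw [bwdS, List.toFinset_card_of_nodup hlt.nodup, fromE_length]
  show (List.replicate (i - Multiset.card μ) 0 ++ lX).length = i
  rw [List.length_append, List.length_replicate, hlX, Multiset.length_sort,
    Multiset.card_map]
  omega

lemma bwdS_fwdS (s : Finset ℕ) : bwdS s.card (fwdS s) = s := by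
  set ls := s.sort (· ≤ ·) with hls
  have hlt : ls.Pairwise (· < ·) := List.sortedLT_iff_pairwise.mp (Finset.sortedLT_sort s)
  set e := toE ls 0 with he
  have hes : e.Pairwise (· ≤ ·) := toE_sorted ls 0 hlt (fun x _ => Nat.zero_le x)
  set lfil := e.filter (fun x => x ≠ 0) with hlfil
  have hfilsorted : lfil.Pairwise (· ≤ ·) := hes.filter _
  have hmap : (fwdS s).map (· / 2) = (↑lfil : Multiset ℕ) := by
    rw [fwdS, ← Multiset.map_coe, Multiset.map_map]
    rw [show ((· / 2) ∘ fun x => 2 * x) = id by funext x; simp only [Function.comp, id]; omega]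
    rw [Multiset.map_id]
  have hcardfwd : Multiset.card (fwdS s) = lfil.length := by
    rw [fwdS, Multiset.coe_card, List.length_map]
  have hlen : e.length = s.card := by rw [he, toE_length, hls, Finset.length_sort]
  have hcnt := count0_filter_length e
  have hcnt' : s.card - lfil.length = e.count 0 := by
    rw [hlfil]; omega
  rw [bwdS, hmap, hcardfwd, sort_coe lfil hfilsorted, hcnt',
    replicate_zero_append e hes, he, fromE_toE ls 0 hlt (fun x _ => Nat.zero_le x), hls,
    Finset.sort_toFinset]

lemma fwdS_bwdS (i : ℕ) (μ : Multiset ℕ) (hpos : ∀ x ∈ μ, 0 < x ∧ 2 ∣ x)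
    (hcard : Multiset.card μ ≤ i) : fwdS (bwdS i μ) = μ := by
  set lX := Multiset.sort (μ.map (· / 2)) (· ≤ ·) with hlX
  set t := List.replicate (i - Multiset.card μ) 0 ++ lX with ht
  have hts : t.Pairwise (· ≤ ·) := sorted_replicate_append _ _ (Multiset.pairwise_sort _ _)
  have hlt : (fromE t 0).Pairwise (· < ·) := fromE_sorted t 0 hts
  have hsort : (bwdS i μ).sort (· ≤ ·) = fromE t 0 := by
    rw [bwdS, sort_toFinset_self _ hlt]
  have hfil : t.filter (fun x => x ≠ 0) = lX := by
    rw [ht, List.filter_append, filter_replicate_zero, List.nil_append,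
      List.filter_eq_self]
    intro b hb
    have hb' : b ∈ μ.map (· / 2) := by
      rw [hlX] at hb
      exact (Multiset.mem_sort _).mp hb
    rw [Multiset.mem_map] at hb'
    obtain ⟨y, hy, rfl⟩ := hb'
    have := hpos y hy
    have : y / 2 ≠ 0 := by omega
    simpa using this
  rw [fwdS, hsort, toE_fromE t 0, hfil]
  rw [← Multiset.map_coe, hlX, Multiset.sort_eq, Multiset.map_map]
  rw [Multiset.map_congr rfl (fun y hy => by
    have := hpos y hy
    have h2 : 2 * (y / 2) = y := Nat.mul_div_cancel' this.2
    show 2 * (y / 2) = id y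
    simpa using h2)]
  rw [Multiset.map_id]


def fwdP (X : Multiset ℕ) : Multiset ℕ := (X.filter (fun x => x ≠ 0)).map (fun x => 4 * x)

def bwdP (j : ℕ) (η : Multiset ℕ) : Multiset ℕ :=
  η.map (· / 4) + Multiset.replicate (j - Multiset.card η) 0

lemma fwdP_mem (X : Multiset ℕ) : ∀ x ∈ fwdP X, 0 < x ∧ 4 ∣ x := by
  intro x hx
  rw [fwdP, Multiset.mem_map] at hx
  obtain ⟨y, hy, rfl⟩ := hx
  have : y ≠ 0 := by
    have := Multiset.of_mem_filter hy
    simpa using this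
  omega

lemma fwdP_card (X : Multiset ℕ) : Multiset.card (fwdP X) ≤ Multiset.card X := by
  rw [fwdP, Multiset.card_map]
  exact Multiset.card_le_card (Multiset.filter_le _ _)

lemma filter_zero_part (X : Multiset ℕ) :
    X.filter (fun x => ¬ x ≠ 0) = Multiset.replicate (X.count 0) 0 := by
  rw [Multiset.filter_congr (fun x _ => show (¬ x ≠ 0) ↔ (x = 0) by simp), Multiset.filter_eq']

lemma fwdP_sum (X : Multiset ℕ) : (fwdP X).sum = 4 * X.sum := by
  have hdec := Multiset.filter_add_not (fun x => x ≠ 0) X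
  have hz : (X.filter (fun x => ¬ x ≠ 0)).sum = 0 := by
    apply Multiset.sum_eq_zero
    intro x hx
    have := Multiset.of_mem_filter hx
    simpa using this
  have hsum : (X.filter (fun x => x ≠ 0)).sum = X.sum := by
    conv_rhs => rw [← hdec]
    rw [Multiset.sum_add, hz, Nat.add_zero]
  rw [fwdP, ← hsum]
  induction (X.filter (fun x => x ≠ 0)) using Multiset.induction_on with
  | empty => simp
  | cons a t ih => simp [Multiset.map_cons, Multiset.sum_cons, ih]; ring

lemma bwdP_card (j : ℕ) (η : Multiset ℕ) (h : Multiset.card η ≤ j) :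
    Multiset.card (bwdP j η) = j := by
  rw [bwdP, Multiset.card_add, Multiset.card_map, Multiset.card_replicate]
  omega

lemma bwdP_fwdP (j : ℕ) (X : Multiset ℕ) (hcard : Multiset.card X = j) :
    bwdP j (fwdP X) = X := by
  have hmap : (fwdP X).map (· / 4) = X.filter (fun x => x ≠ 0) := by
    rw [fwdP, Multiset.map_map]
    rw [Multiset.map_congr rfl (fun y _ => by
      show (4 * y) / 4 = id y
      simp)]
    rw [Multiset.map_id]
  have hcardf : Multiset.card (fwdP X) = Multiset.card (X.filter (fun x => x ≠ 0)) := by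
    rw [fwdP, Multiset.card_map]
  have hdec := Multiset.filter_add_not (fun x => x ≠ 0) X
  have hcards : Multiset.card (X.filter (fun x => x ≠ 0)) + X.count 0 = j := by
    have := congrArg Multiset.card hdec
    rw [Multiset.card_add, filter_zero_part, Multiset.card_replicate] at this
    omega
  rw [bwdP, hmap, hcardf, show j - Multiset.card (X.filter (fun x => x ≠ 0)) = X.count 0 by omega]
  conv_rhs => rw [← hdec]
  rw [filter_zero_part]

lemma fwdP_bwdP (j : ℕ) (η : Multiset ℕ) (hmem : ∀ x ∈ η, 0 < x ∧ 4 ∣ x)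
    (hcard : Multiset.card η ≤ j) : fwdP (bwdP j η) = η := by
  have hfil : (bwdP j η).filter (fun x => x ≠ 0) = η.map (· / 4) := by
    rw [bwdP, Multiset.filter_add]
    have h1 : (Multiset.replicate (j - Multiset.card η) 0).filter (fun x : ℕ => x ≠ 0) = 0 := by
      rw [Multiset.filter_eq_nil]
      intro a ha
      have := Multiset.eq_of_mem_replicate ha
      simp [this]
    have h2 : (η.map (· / 4)).filter (fun x => x ≠ 0) = η.map (· / 4) := by
      rw [Multiset.filter_eq_self]
      intro a ha
      rw [Multiset.mem_map] at ha
      obtain ⟨y, hy, rfl⟩ := ha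
      have h3 := hmem y hy
      have : y / 4 ≠ 0 := by
        obtain ⟨hpos, d, rfl⟩ := h3
        omega
      simpa using this
    rw [h1, h2, add_zero]
  rw [fwdP, hfil, Multiset.map_map]
  rw [Multiset.map_congr rfl (fun y hy => by
    show 4 * (y / 4) = id y
    have := (hmem y hy).2
    simpa using Nat.mul_div_cancel' this)]
  rw [Multiset.map_id]


def TC (i j n : ℕ) := {p : Multiset ℕ × Multiset ℕ //
          (∀ x ∈ p.1, 0 < x ∧ 2 ∣ x) ∧ Multiset.card p.1 ≤ i ∧
          (∀ x ∈ p.2, 0 < x ∧ 4 ∣ x) ∧ Multiset.card p.2 ≤ j ∧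
          p.1.sum + p.2.sum + (2 * i ^ 2 + 4 * j ^ 2 + 4 * i * j - i) = n}

lemma i_le_sq (i : ℕ) : i ≤ i * i := by
  rcases Nat.eq_zero_or_pos i with h | h
  · simp [h]
  · exact Nat.le_mul_of_pos_left _ h

def eqB2C (i j n : ℕ) : TB2 i j n ≃ TC i j n := by
  refine ⟨fun p => ⟨(fwdS p.val.1, fwdP p.val.2), ?_⟩,
          fun q => ⟨(bwdS i q.val.1, bwdP j q.val.2), ?_⟩, ?_, ?_⟩
  · obtain ⟨⟨st, X⟩, h1, h2, h3⟩ := p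
    dsimp only at h1 h2 h3 ⊢
    have hs := fwdS_sum st
    rw [h1] at hs
    have hp := fwdP_sum X
    refine ⟨fwdS_mem st, h1 ▸ fwdS_card st, fwdP_mem X, h2 ▸ fwdP_card X, ?_⟩
    have e1 : (i + 2 * j) * (i + 2 * j) = i * i + 4 * (i * j) + 4 * (j * j) := by ring
    have e3 := i_le_sq i
    rw [show 2 * i ^ 2 + 4 * j ^ 2 + 4 * i * j = i * i + (i * i + 4 * (i * j) + 4 * (j * j))
      from by ring]
    omega
  · obtain ⟨⟨μ, η⟩, hμ, hμc, hη, hηc, hsum⟩ := q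
    dsimp only at hμ hμc hη hηc hsum ⊢
    have hs := fwdS_sum (bwdS i μ)
    rw [bwdS_card i μ hμc, fwdS_bwdS i μ hμ hμc] at hs
    have hp := fwdP_sum (bwdP j η)
    rw [fwdP_bwdP j η hη hηc] at hp
    refine ⟨bwdS_card i μ hμc, bwdP_card j η hηc, ?_⟩
    have e1 : (i + 2 * j) * (i + 2 * j) = i * i + 4 * (i * j) + 4 * (j * j) := by ring
    have e3 := i_le_sq i
    rw [show 2 * i ^ 2 + 4 * j ^ 2 + 4 * i * j = i * i + (i * i + 4 * (i * j) + 4 * (j * j))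
      from by ring] at hsum
    omega
  · rintro ⟨⟨st, X⟩, h1, h2, h3⟩
    apply Subtype.ext
    show (bwdS i (fwdS st), bwdP j (fwdP X)) = (st, X)
    rw [← h1, bwdS_fwdS st, bwdP_fwdP j X h2]
  · rintro ⟨⟨μ, η⟩, hμ, hμc, hη, hηc, hsum⟩
    apply Subtype.ext
    show (fwdS (bwdS i μ), fwdP (bwdP j η)) = (μ, η)
    rw [fwdS_bwdS i μ hμ hμc, fwdP_bwdP j η hη hηc]

end S17

theorem stmt_17 (i j n : ℕ) :
    Nat.card {lam : Multiset ℕ //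
        lam.sum = n ∧ (∀ p ∈ lam, Odd p) ∧ lam.Nodup ∧
        Multiset.card lam = i + 2 * j ∧ sol2 lam = i}
      = Nat.card {p : Multiset ℕ × Multiset ℕ //
          (∀ x ∈ p.1, 0 < x ∧ 2 ∣ x) ∧ Multiset.card p.1 ≤ i ∧
          (∀ x ∈ p.2, 0 < x ∧ 4 ∣ x) ∧ Multiset.card p.2 ≤ j ∧
          p.1.sum + p.2.sum + (2 * i ^ 2 + 4 * j ^ 2 + 4 * i * j - i) = n} :=
  Nat.card_congr ((S17.eqAB i j n).trans ((S17.eqBB2 i j n).trans (S17.eqB2C i j n)))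
end

section
/- Fix integers i ≥ 0 and n ≥ 0. The number of pairs (λ, μ) where λ is a partition with exactly i parts, all parts of λ odd, μ is a partition into distinct even parts with every part at least 2i + 2, and |λ| + |μ| = n, equals the number of pairs (β, γ) where β is a partition with exactly i parts, all parts of β congruent to 1 modulo 4, γ is a partition into distinct even parts, and |β| + |γ| = n. -/
namespace Stmt18


/-- Build a multiset of `i` naturals from "gap coordinates". -/
def F : (i : ℕ) → (Fin i → ℕ) → Multiset ℕ
  | 0, _ => 0
  | (i+1), a => ((F i (fun m => a m.succ)).map (· + a 0)).cons (a 0)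

lemma F_card (i : ℕ) (a : Fin i → ℕ) : (F i a).card = i := by
  induction i with
  | zero => rfl
  | succ i ih => simp [F, ih]

lemma sum_map_add (t : Multiset ℕ) (c : ℕ) :
    (t.map (· + c)).sum = t.sum + t.card * c := by
  induction t using Multiset.induction with
  | empty => simp
  | cons a t ih => simp [ih]; ring

lemma F_sum (i : ℕ) (a : Fin i → ℕ) :
    (F i a).sum = ∑ m : Fin i, (i - m.val) * a m := by
  induction i with
  | zero => simp [F]
  | succ i ih =>
    rw [Fin.sum_univ_succ]
    simp only [F, Multiset.sum_cons, sum_map_add, ih, F_card]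
    have : ∀ m : Fin i, (i + 1 - (m.succ : Fin (i+1)).val) * a m.succ
        = (i - m.val) * a m.succ := by
      intro m; simp [Fin.val_succ, Nat.succ_sub_succ]
    rw [Finset.sum_congr rfl (fun m _ => (this m))]
    simp [Fin.val_zero]
    ring

lemma F_le (i : ℕ) (a : Fin (i+1) → ℕ) : ∀ x ∈ F (i+1) a, a 0 ≤ x := by
  intro x hx
  simp only [F, Multiset.mem_cons, Multiset.mem_map] at hx
  rcases hx with rfl | ⟨y, _, rfl⟩
  · exact le_refl _
  · omega

lemma F_inj (i : ℕ) : Function.Injective (F i) := by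
  induction i with
  | zero => intro a b _; funext m; exact absurd m.2 (by omega)
  | succ i ih =>
    intro a b hab
    have h0 : a 0 = b 0 := by
      have ha : a 0 ∈ F (i+1) b := by
        rw [← hab]; simp [F]
      have hb : b 0 ∈ F (i+1) a := by
        rw [hab]; simp [F]
      exact le_antisymm (F_le i a (b 0) hb) (F_le i b (a 0) ha)
    have htail : F i (fun m => a m.succ) = F i (fun m => b m.succ) := by
      have hmap : ((F i (fun m => a m.succ)).map (· + b 0))
          = ((F i (fun m => b m.succ)).map (· + b 0)) := by
        have h2 := hab
        simp only [F] at h2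
        rw [h0] at h2
        exact (Multiset.cons_inj_right _).mp h2
      exact Multiset.map_injective (add_left_injective (b 0)) hmap
    have := ih htail
    funext m
    refine Fin.cases h0 (fun m => ?_) m
    exact congrFun this m
  




lemma exists_min (ν : Multiset ℕ) (h : ν ≠ 0) : ∃ c ∈ ν, ∀ x ∈ ν, c ≤ x := by
  induction ν using Multiset.induction with
  | empty => exact absurd rfl h
  | cons a t ih =>
    by_cases ht : t = 0
    · subst ht; exact ⟨a, by simp⟩
    · obtain ⟨c, hc, hmin⟩ := ih ht
      refine ⟨min a c, ?_, ?_⟩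
      · rcases le_total a c with h' | h'
        · simp [min_eq_left h']
        · simp [min_eq_right h', hc]
      · intro x hx
        rcases Multiset.mem_cons.mp hx with rfl | hx
        · exact min_le_left _ _
        · exact le_trans (min_le_right _ _) (hmin x hx)

lemma F_surj (i : ℕ) : ∀ ν : Multiset ℕ, ν.card = i → ∃ a, F i a = ν := by
  induction i with
  | zero => intro ν hν; exact ⟨fun m => 0, (Multiset.card_eq_zero.mp hν).symm⟩
  | succ i ih =>
    intro ν hν
    have hne : ν ≠ 0 := by
      intro h; rw [h] at hν; simp at hν
    obtain ⟨c, hc, hmin⟩ := exists_min ν hne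
    have hcard : ((ν.erase c).map (· - c)).card = i := by
      simp [Multiset.card_erase_of_mem hc, hν]
    obtain ⟨a', ha'⟩ := ih _ hcard
    refine ⟨Fin.cons c a', ?_⟩
    simp only [F, Fin.cons_succ, Fin.cons_zero, ha']
    rw [Multiset.map_map]
    have hcomp : (ν.erase c).map ((· + c) ∘ (· - c)) = ν.erase c := by
      conv_rhs => rw [← Multiset.map_id (ν.erase c)]
      apply Multiset.map_congr rfl
      intro x hx
      have : c ≤ x := hmin x (Multiset.mem_of_mem_erase hx)
      simp only [Function.comp, id]
      omega
    rw [hcomp]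
    exact Multiset.cons_erase hc




noncomputable def FEquiv (i : ℕ) : (Fin i → ℕ) ≃ {ν : Multiset ℕ // ν.card = i} :=
  Equiv.ofBijective (fun a => ⟨F i a, F_card i a⟩)
    ⟨fun a b h => F_inj i (congrArg Subtype.val h),
     fun ν => (F_surj i ν.1 ν.2).imp (fun _ ha => Subtype.ext ha)⟩

lemma FEquiv_val (i : ℕ) (a : Fin i → ℕ) : (FEquiv i a).1 = F i a := rfl

lemma F_symm (i : ℕ) (ν : {ν : Multiset ℕ // ν.card = i}) :
    F i ((FEquiv i).symm ν) = ν.1 := by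
  have := (FEquiv i).apply_symm_apply ν
  exact congrArg Subtype.val this

lemma sum_map_affine (s : Multiset ℕ) (c d : ℕ) (g : ℕ → ℕ) :
    (s.map (fun x => c * g x + d)).sum = c * (s.map g).sum + s.card * d := by
  induction s using Multiset.induction with
  | empty => simp
  | cons a t ih => simp [ih]; ring

/-- generic coding equiv: partitions with i parts in the "image" of an affine-ish code. -/
noncomputable def codeEquiv (i : ℕ) (c : ℕ) (hc : 1 < c) (P : ℕ → Prop)
    (hP : ∀ x, P x ↔ ∃ k, x = c * k + 1) :
    {l : Multiset ℕ // Multiset.card l = i ∧ ∀ x ∈ l, P x} ≃ {a : Fin i → ℕ // True} where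
  toFun l := ⟨(FEquiv i).symm ⟨l.1.map (· / c), by simp [l.2.1]⟩, trivial⟩
  invFun a := ⟨(F i a.1).map (fun k => c * k + 1), by
    constructor
    · simp [F_card]
    · intro x hx
      simp only [Multiset.mem_map] at hx
      obtain ⟨k, _, rfl⟩ := hx
      exact (hP _).mpr ⟨k, rfl⟩⟩
  left_inv l := by
    apply Subtype.ext
    show ((F i ((FEquiv i).symm ⟨l.1.map (· / c), by simp [l.2.1]⟩)).map (fun k => c * k + 1)) = l.1
    rw [F_symm]
    show (l.1.map (· / c)).map (fun k => c * k + 1) = l.1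
    rw [Multiset.map_map]
    conv_rhs => rw [← Multiset.map_id l.1]
    apply Multiset.map_congr rfl
    intro x hx
    obtain ⟨k, rfl⟩ := (hP x).mp (l.2.2 x hx)
    simp only [Function.comp, id]
    rw [Nat.mul_add_div (show 0 < c by omega), Nat.div_eq_of_lt hc]
    ring
  right_inv a := by
    apply Subtype.ext
    show ((FEquiv i).symm ⟨((F i a.1).map (fun k => c * k + 1)).map (· / c), _⟩) = a.1
    have h1 : ((F i a.1).map (fun k => c * k + 1)).map (· / c) = F i a.1 := by
      rw [Multiset.map_map]
      conv_rhs => rw [← Multiset.map_id (F i a.1)]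
      apply Multiset.map_congr rfl
      intro x _
      simp only [Function.comp, id]
      rw [Nat.mul_add_div (show 0 < c by omega), Nat.div_eq_of_lt hc]
      omega
    have h2 : (⟨((F i a.1).map (fun k => c * k + 1)).map (· / c), by simp [F_card]⟩ :
        {ν : Multiset ℕ // ν.card = i}) = FEquiv i a.1 := by
      apply Subtype.ext
      rw [FEquiv_val]
      exact h1
    rw [h2, Equiv.symm_apply_apply]

lemma codeEquiv_sum (i : ℕ) (c : ℕ) (hc : 1 < c) (P : ℕ → Prop)
    (hP : ∀ x, P x ↔ ∃ k, x = c * k + 1)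
    (l : {l : Multiset ℕ // Multiset.card l = i ∧ ∀ x ∈ l, P x}) :
    l.1.sum = i + c * ∑ m : Fin i, (i - m.val) * (codeEquiv i c hc P hP l).1 m := by
  have hF : F i ((codeEquiv i c hc P hP l)).1 = l.1.map (· / c) := by
    show F i ((FEquiv i).symm ⟨l.1.map (· / c), by simp [l.2.1]⟩) = l.1.map (· / c)
    exact F_symm i _
  rw [← F_sum, hF]
  have : l.1.map (fun x => c * (x / c) + 1) = l.1 := by
    conv_rhs => rw [← Multiset.map_id l.1]
    apply Multiset.map_congr rfl
    intro x hx
    obtain ⟨k, rfl⟩ := (hP x).mp (l.2.2 x hx)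
    simp only [id]
    rw [Nat.mul_add_div (show 0 < c by omega), Nat.div_eq_of_lt hc]
    ring
  calc l.1.sum = (l.1.map (fun x => c * (x / c) + 1)).sum := by rw [this]
    _ = c * (l.1.map (· / c)).sum + l.1.card * 1 := by
        rw [← sum_map_affine l.1 c 1 (· / c)]
    _ = i + c * (l.1.map (· / c)).sum := by rw [l.2.1]; ring



variable (i : ℕ)

def Pmu (μ : Multiset ℕ) : Prop := (∀ x ∈ μ, 0 < x ∧ 2 ∣ x ∧ 2 * i + 2 ≤ x) ∧ μ.Nodup
def Pga (γ : Multiset ℕ) : Prop := (∀ x ∈ γ, 0 < x ∧ 2 ∣ x) ∧ γ.Nodup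

def small (s : Fin i → Bool) : Multiset ℕ :=
  (Finset.univ.filter (fun m => s m = true)).val.map (fun m : Fin i => 2 * (i - m.val))

lemma small_inj : Function.Injective (fun m : Fin i => 2 * (i - m.val)) := by
  intro a b hab
  simp only at hab
  have ha := a.2
  have hb := b.2
  apply Fin.ext
  omega

lemma small_nodup (s : Fin i → Bool) : (small i s).Nodup :=
  (Finset.filter _ Finset.univ).nodup.map (small_inj i)

lemma mem_small (s : Fin i → Bool) (x : ℕ) :
    x ∈ small i s ↔ ∃ m : Fin i, s m = true ∧ x = 2 * (i - m.val) := by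
  simp only [small, Multiset.mem_map, Finset.mem_val, Finset.mem_filter, Finset.mem_univ,
    true_and]
  constructor
  · rintro ⟨m, hm, rfl⟩; exact ⟨m, hm, rfl⟩
  · rintro ⟨m, hm, rfl⟩; exact ⟨m, hm, rfl⟩

lemma small_sum (s : Fin i → Bool) :
    (small i s).sum = ∑ m : Fin i, (if s m then 2 * (i - m.val) else 0) := by
  rw [small]
  rw [show ((Finset.univ.filter (fun m => s m = true)).val.map
      (fun m : Fin i => 2 * (i - m.val))).sum
    = ∑ m ∈ Finset.univ.filter (fun m => s m = true), 2 * (i - m.val) from rfl]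
  rw [Finset.sum_filter]

lemma small_lt (s : Fin i → Bool) (x : ℕ) (hx : x ∈ small i s) : 0 < x ∧ x < 2 * i + 2 := by
  obtain ⟨m, _, rfl⟩ := (mem_small i s x).mp hx
  have := m.2
  omega

def splitTo (γ : {γ : Multiset ℕ // Pga γ}) :
    {z : (Fin i → Bool) × Multiset ℕ // Pmu i z.2} :=
  ⟨(fun m => decide (2 * (i - m.val) ∈ γ.1), γ.1.filter (fun x => 2 * i + 2 ≤ x)), by
    constructor
    · intro x hx
      rw [Multiset.mem_filter] at hx
      have := γ.2.1 x hx.1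
      exact ⟨this.1, this.2, hx.2⟩
    · exact γ.2.2.filter _⟩

def splitInv (z : {z : (Fin i → Bool) × Multiset ℕ // Pmu i z.2}) :
    {γ : Multiset ℕ // Pga γ} :=
  ⟨z.1.2 + small i z.1.1, by
    constructor
    · intro x hx
      rw [Multiset.mem_add] at hx
      rcases hx with hx | hx
      · have := z.2.1 x hx; exact ⟨this.1, this.2.1⟩
      · obtain ⟨m, _, rfl⟩ := (mem_small i _ x).mp hx
        have := m.2
        exact ⟨by omega, ⟨i - m.val, rfl⟩⟩
    · rw [Multiset.nodup_add]
      refine ⟨z.2.2, small_nodup i _, ?_⟩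
      rw [Multiset.disjoint_left]
      intro x hx hx'
      have h1 := (z.2.1 x hx).2.2
      have h2 := (small_lt i _ x hx').2
      omega⟩

lemma split_left (γ : {γ : Multiset ℕ // Pga γ}) : splitInv i (splitTo i γ) = γ := by
  apply Subtype.ext
  show γ.1.filter (fun x => 2 * i + 2 ≤ x) + small i (fun m => decide (2 * (i - m.val) ∈ γ.1))
      = γ.1
  have hsm : small i (fun m => decide (2 * (i - m.val) ∈ γ.1))
      = γ.1.filter (fun x => ¬ (2 * i + 2 ≤ x)) := by
    rw [Multiset.Nodup.ext (small_nodup i _) (γ.2.2.filter _)]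
    intro x
    rw [mem_small, Multiset.mem_filter]
    constructor
    · rintro ⟨m, hm, rfl⟩
      have := m.2
      refine ⟨by simpa using hm, by omega⟩
    · rintro ⟨hx, hlt⟩
      obtain ⟨hpos, k, hk⟩ := γ.2.1 x hx
      refine ⟨⟨i - k, by omega⟩, ?_, by simp; omega⟩
      simp only [decide_eq_true_eq]
      have : 2 * (i - (i - k)) = x := by omega
      rwa [this]
  rw [hsm, Multiset.filter_add_not]

lemma split_right (z : {z : (Fin i → Bool) × Multiset ℕ // Pmu i z.2}) :
    splitTo i (splitInv i z) = z := by
  apply Subtype.ext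
  apply Prod.ext
  · funext m
    show decide (2 * (i - m.val) ∈ z.1.2 + small i z.1.1) = z.1.1 m
    have hnot : 2 * (i - m.val) ∉ z.1.2 := by
      intro h
      have := (z.2.1 _ h).2.2
      have := m.2
      omega
    have : (2 * (i - m.val) ∈ z.1.2 + small i z.1.1) ↔ z.1.1 m = true := by
      rw [Multiset.mem_add, mem_small]
      constructor
      · rintro (h | ⟨m', hm', he⟩)
        · exact absurd h hnot
        · have : m' = m := small_inj i (by simpa using he.symm)
          rwa [← this]
      · intro h; exact Or.inr ⟨m, h, rfl⟩
    rw [Bool.eq_iff_iff, decide_eq_true_eq]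
    exact this
  · show (z.1.2 + small i z.1.1).filter (fun x => 2 * i + 2 ≤ x) = z.1.2
    rw [Multiset.filter_add]
    have h1 : z.1.2.filter (fun x => 2 * i + 2 ≤ x) = z.1.2 :=
      Multiset.filter_eq_self.mpr (fun x hx => (z.2.1 x hx).2.2)
    have h2 : (small i z.1.1).filter (fun x => 2 * i + 2 ≤ x) = 0 := by
      rw [Multiset.filter_eq_nil]
      intro x hx
      have := (small_lt i _ x hx).2
      omega
    rw [h1, h2, add_zero]

def splitEquiv : {γ : Multiset ℕ // Pga γ} ≃ {z : (Fin i → Bool) × Multiset ℕ // Pmu i z.2} :=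
  ⟨splitTo i, splitInv i, split_left i, split_right i⟩

lemma split_sum (γ : {γ : Multiset ℕ // Pga γ}) :
    γ.1.sum = ((splitEquiv i γ).1.2).sum
      + ∑ m : Fin i, (if (splitEquiv i γ).1.1 m then 2 * (i - m.val) else 0) := by
  have := congrArg (fun t => Multiset.sum t.1) (split_left i γ)
  rw [← this]
  show ((splitTo i γ).1.2 + small i (splitTo i γ).1.1).sum = _
  rw [Multiset.sum_add, small_sum]
  rfl



def subtypeProdEquiv {α α' β β' : Type*} {P : α → Prop} {P' : α' → Prop}
    {Q : β → Prop} {Q' : β' → Prop}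
    (e₁ : {a // P a} ≃ {a' // P' a'}) (e₂ : {b // Q b} ≃ {b' // Q' b'})
    (R : α → β → Prop) (R' : α' → β' → Prop)
    (h : ∀ (a : {a // P a}) (b : {b // Q b}), R a.1 b.1 ↔ R' (e₁ a).1 (e₂ b).1) :
    {p : α × β // P p.1 ∧ Q p.2 ∧ R p.1 p.2} ≃
      {p : α' × β' // P' p.1 ∧ Q' p.2 ∧ R' p.1 p.2} where
  toFun p := ⟨((e₁ ⟨p.1.1, p.2.1⟩).1, (e₂ ⟨p.1.2, p.2.2.1⟩).1),
    (e₁ _).2, (e₂ _).2, (h _ _).mp p.2.2.2⟩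
  invFun p := ⟨((e₁.symm ⟨p.1.1, p.2.1⟩).1, (e₂.symm ⟨p.1.2, p.2.2.1⟩).1),
    (e₁.symm _).2, (e₂.symm _).2, by
      have := (h (e₁.symm ⟨p.1.1, p.2.1⟩) (e₂.symm ⟨p.1.2, p.2.2.1⟩)).mpr
      apply this
      rw [Equiv.apply_symm_apply, Equiv.apply_symm_apply]
      exact p.2.2.2⟩
  left_inv p := by
    apply Subtype.ext
    show ((e₁.symm ⟨(e₁ ⟨p.1.1, _⟩).1, _⟩).1, (e₂.symm ⟨(e₂ ⟨p.1.2, _⟩).1, _⟩).1) = p.1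
    have h1 : (⟨(e₁ ⟨p.1.1, p.2.1⟩).1, (e₁ _).2⟩ : {a' // P' a'}) = e₁ ⟨p.1.1, p.2.1⟩ := rfl
    have h2 : (⟨(e₂ ⟨p.1.2, p.2.2.1⟩).1, (e₂ _).2⟩ : {b' // Q' b'}) = e₂ ⟨p.1.2, p.2.2.1⟩ := rfl
    rw [h1, h2, Equiv.symm_apply_apply, Equiv.symm_apply_apply]
  right_inv p := by
    apply Subtype.ext
    show ((e₁ ⟨(e₁.symm ⟨p.1.1, _⟩).1, _⟩).1, (e₂ ⟨(e₂.symm ⟨p.1.2, _⟩).1, _⟩).1) = p.1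
    have h1 : (⟨(e₁.symm ⟨p.1.1, p.2.1⟩).1, (e₁.symm _).2⟩ : {a // P a})
        = e₁.symm ⟨p.1.1, p.2.1⟩ := rfl
    have h2 : (⟨(e₂.symm ⟨p.1.2, p.2.2.1⟩).1, (e₂.symm _).2⟩ : {b // Q b})
        = e₂.symm ⟨p.1.2, p.2.2.1⟩ := rfl
    rw [h1, h2, Equiv.apply_symm_apply, Equiv.apply_symm_apply]

def ehalf (i : ℕ) : {a : Fin i → ℕ // True} ≃
    {bs : (Fin i → ℕ) × (Fin i → Bool) // True} where
  toFun a := ⟨(fun m => a.1 m / 2, fun m => decide (a.1 m % 2 = 1)), trivial⟩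
  invFun bs := ⟨fun m => 2 * bs.1.1 m + (if bs.1.2 m then 1 else 0), trivial⟩
  left_inv a := by
    apply Subtype.ext
    funext m
    show 2 * (a.1 m / 2) + (if decide (a.1 m % 2 = 1) then 1 else 0) = a.1 m
    rcases Nat.even_or_odd (a.1 m) with he | ho
    · have : a.1 m % 2 = 0 := Nat.even_iff.mp he
      simp [this]
      omega
    · have : a.1 m % 2 = 1 := Nat.odd_iff.mp ho
      simp [this]
      omega
  right_inv bs := by
    apply Subtype.ext
    apply Prod.ext
    · funext m
      show (2 * bs.1.1 m + (if bs.1.2 m then 1 else 0)) / 2 = bs.1.1 m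
      cases h : bs.1.2 m <;> simp [h] <;> omega
    · funext m
      show decide ((2 * bs.1.1 m + (if bs.1.2 m then 1 else 0)) % 2 = 1) = bs.1.2 m
      cases h : bs.1.2 m <;> simp [h] <;> omega

lemma ehalf_eq (i : ℕ) (a : {a : Fin i → ℕ // True}) (m : Fin i) :
    a.1 m = 2 * (ehalf i a).1.1 m + (if (ehalf i a).1.2 m then 1 else 0) := by
  show a.1 m = 2 * (a.1 m / 2) + (if decide (a.1 m % 2 = 1) then 1 else 0)
  rcases Nat.even_or_odd (a.1 m) with he | ho
  · have : a.1 m % 2 = 0 := Nat.even_iff.mp he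
    simp [this]; omega
  · have : a.1 m % 2 = 1 := Nat.odd_iff.mp ho
    simp [this]; omega



variable (i n : ℕ)

lemma odd_iff' : ∀ x : ℕ, Odd x ↔ ∃ k, x = 2 * k + 1 := by
  intro x
  rw [Nat.odd_iff]
  constructor
  · intro h; exact ⟨x / 2, by omega⟩
  · rintro ⟨k, rfl⟩; omega

lemma mod4_iff' : ∀ x : ℕ, x % 4 = 1 ↔ ∃ k, x = 4 * k + 1 := by
  intro x
  constructor
  · intro h; exact ⟨x / 4, by omega⟩
  · rintro ⟨k, rfl⟩; omega

noncomputable def chainA :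
    {p : Multiset ℕ × Multiset ℕ //
        Multiset.card p.1 = i ∧ (∀ x ∈ p.1, Odd x) ∧
        (∀ x ∈ p.2, 0 < x ∧ 2 ∣ x ∧ 2 * i + 2 ≤ x) ∧ p.2.Nodup ∧
        p.1.sum + p.2.sum = n} ≃
    {p : ((Fin i → ℕ) × (Fin i → Bool)) × Multiset ℕ //
        True ∧ Pmu i p.2 ∧
        (i + 4 * ∑ m : Fin i, (i - m.val) * p.1.1 m)
          + (p.2.sum + ∑ m : Fin i, (if p.1.2 m then 2 * (i - m.val) else 0)) = n} := by
  refine Equiv.trans (Equiv.subtypeEquivRight (q := fun p : Multiset ℕ × Multiset ℕ =>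
      (Multiset.card p.1 = i ∧ ∀ x ∈ p.1, Odd x) ∧ Pmu i p.2 ∧ p.1.sum + p.2.sum = n)
      (fun p => by unfold Pmu; tauto)) ?_
  refine Equiv.trans (subtypeProdEquiv
      (codeEquiv i 2 (by norm_num) Odd odd_iff')
      (Equiv.refl {μ : Multiset ℕ // Pmu i μ})
      (fun l μ => l.sum + μ.sum = n)
      (fun a μ => (i + 2 * ∑ m : Fin i, (i - m.val) * a m) + μ.sum = n)
      (fun l μ => by rw [codeEquiv_sum i 2 (by norm_num) Odd odd_iff' l]; rfl)) ?_
  refine Equiv.trans (subtypeProdEquiv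
      (ehalf i)
      (Equiv.refl {μ : Multiset ℕ // Pmu i μ})
      (fun a μ => (i + 2 * ∑ m : Fin i, (i - m.val) * a m) + μ.sum = n)
      (fun bs μ => (i + 2 * ∑ m : Fin i, (i - m.val) *
          (2 * bs.1 m + (if bs.2 m then 1 else 0))) + μ.sum = n)
      (fun a μ => by
        have hs : (∑ m : Fin i, (i - m.val) * a.1 m)
            = ∑ m : Fin i, (i - m.val) * (2 * (ehalf i a).1.1 m
                + (if (ehalf i a).1.2 m then 1 else 0)) :=
          Finset.sum_congr rfl (fun m _ => by rw [← ehalf_eq i a m])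
        rw [hs]
        rfl)) ?_
  refine Equiv.subtypeEquivRight (fun p => ?_)
  have key : 2 * ∑ m : Fin i, (i - m.val) * (2 * p.1.1 m + (if p.1.2 m then 1 else 0))
      = 4 * (∑ m : Fin i, (i - m.val) * p.1.1 m)
        + ∑ m : Fin i, (if p.1.2 m then 2 * (i - m.val) else 0) := by
    rw [Finset.mul_sum, Finset.mul_sum, ← Finset.sum_add_distrib]
    apply Finset.sum_congr rfl
    intro m _
    cases h : p.1.2 m <;> simp [h] <;> ring
  constructor
  · rintro ⟨h1, h2, h3⟩; exact ⟨h1, h2, by omega⟩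
  · rintro ⟨h1, h2, h3⟩; exact ⟨h1, h2, by omega⟩

noncomputable def chainB :
    {p : Multiset ℕ × Multiset ℕ //
        Multiset.card p.1 = i ∧ (∀ x ∈ p.1, x % 4 = 1) ∧
        (∀ x ∈ p.2, 0 < x ∧ 2 ∣ x) ∧ p.2.Nodup ∧
        p.1.sum + p.2.sum = n} ≃
    {p : ((Fin i → ℕ) × (Fin i → Bool)) × Multiset ℕ //
        True ∧ Pmu i p.2 ∧
        (i + 4 * ∑ m : Fin i, (i - m.val) * p.1.1 m)
          + (p.2.sum + ∑ m : Fin i, (if p.1.2 m then 2 * (i - m.val) else 0)) = n} := by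
  refine Equiv.trans (Equiv.subtypeEquivRight (q := fun p : Multiset ℕ × Multiset ℕ =>
      (Multiset.card p.1 = i ∧ ∀ x ∈ p.1, x % 4 = 1) ∧ Pga p.2 ∧ p.1.sum + p.2.sum = n)
      (fun p => by unfold Pga; tauto)) ?_
  refine Equiv.trans (subtypeProdEquiv
      (codeEquiv i 4 (by norm_num) (fun x => x % 4 = 1) mod4_iff')
      (splitEquiv i)
      (fun l γ => l.sum + γ.sum = n)
      (fun (a : Fin i → ℕ) (z : (Fin i → Bool) × Multiset ℕ) =>
        (i + 4 * ∑ m : Fin i, (i - m.val) * a m)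
          + (z.2.sum + ∑ m : Fin i, (if z.1 m then 2 * (i - m.val) else 0)) = n)
      (fun l γ => by
        rw [codeEquiv_sum i 4 (by norm_num) (fun x => x % 4 = 1) mod4_iff' l,
          split_sum i γ])) ?_
  exact Equiv.subtypeEquiv
    (Equiv.prodAssoc (Fin i → ℕ) (Fin i → Bool) (Multiset ℕ)).symm
    (fun p => Iff.rfl)

end Stmt18

theorem stmt_18 (i n : ℕ) :
    Nat.card {p : Multiset ℕ × Multiset ℕ //
        Multiset.card p.1 = i ∧ (∀ x ∈ p.1, Odd x) ∧
        (∀ x ∈ p.2, 0 < x ∧ 2 ∣ x ∧ 2 * i + 2 ≤ x) ∧ p.2.Nodup ∧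
        p.1.sum + p.2.sum = n}
      = Nat.card {p : Multiset ℕ × Multiset ℕ //
          Multiset.card p.1 = i ∧ (∀ x ∈ p.1, x % 4 = 1) ∧
          (∀ x ∈ p.2, 0 < x ∧ 2 ∣ x) ∧ p.2.Nodup ∧
          p.1.sum + p.2.sum = n} :=
  Nat.card_congr ((Stmt18.chainA i n).trans (Stmt18.chainB i n).symm)
end

section
/- Fix an integer n ≥ 0. The number of triples (i, λ, μ) where i ≥ 0 is an integer, λ is a partition with either 2i or 2i − 1 parts in which every two consecutive parts (in increasing order) differ by at least 2 and, in the case of 2i − 1 parts, the smallest part is at least 2, μ is a partition into distinct parts with every part at least 2i + 1, and |λ| + |μ| = n, equals the number of pairs (β, γ) where β is a partition into distinct even parts, γ is a partition into distinct parts, and |β| + |γ| = n. -/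
namespace Stmt19

instance : IsTrans ℕ (fun a b => a + 2 ≤ b) := ⟨fun _ _ _ h1 h2 => by omega⟩

abbrev Chain2 (l : List ℕ) : Prop := List.Chain' (fun a b => a + 2 ≤ b) l

def Fb : List ℕ → ℕ → List ℕ
  | [], _ => []
  | x :: r, c => (x - (c + (x + c) % 2)) :: Fb r (c + (x + c) % 2)

def Ft : List ℕ → ℕ → List ℕ
  | [], _ => []
  | x :: r, c => (if (x + c) % 2 = 1 then [r.length + 1] else []) ++ Ft r (c + (x + c) % 2)

def Gf : List ℕ → Multiset ℕ → ℕ → List ℕ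
  | [], _, _ => []
  | y :: r, T, c =>
    (y + c + (if (r.length + 1) ∈ T then 1 else 0)) ::
      Gf r T (c + (if (r.length + 1) ∈ T then 1 else 0))

lemma fb_length (l : List ℕ) (c : ℕ) : (Fb l c).length = l.length := by
  induction l generalizing c with
  | nil => rfl
  | cons x r ih => simp [Fb, ih]

lemma gf_length (b : List ℕ) (T : Multiset ℕ) (c : ℕ) : (Gf b T c).length = b.length := by
  induction b generalizing c with
  | nil => rfl
  | cons y r ih => simp [Gf, ih]

lemma fspec (l : List ℕ) (c : ℕ) (h2 : Chain2 l) (hc : ∀ x ∈ l.head?, c ≤ x) :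
    List.Chain' (· < ·) (Fb l c) ∧
    (∀ y ∈ Fb l c, 2 ∣ y) ∧
    (Fb l c).sum + (Ft l c).sum + c * l.length = l.sum ∧
    List.Chain' (· > ·) (Ft l c) ∧
    (∀ j ∈ Ft l c, 1 ≤ j ∧ j ≤ l.length) ∧
    (Fb l c).head? = l.head?.map (fun x => x - (c + (x + c) % 2)) := by
  induction l generalizing c with
  | nil => simp [Fb, Ft, List.isChain_nil, List.Chain']
  | cons x r ih =>
    have hcx : c ≤ x := hc x rfl
    have h2r : Chain2 r := h2.tail
    have hcr : ∀ z ∈ r.head?, c + (x + c) % 2 ≤ z := by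
      intro z hz
      rcases r with _ | ⟨y, r'⟩
      · simp at hz
      · simp only [List.head?_cons, Option.mem_def, Option.some.injEq] at hz
        have := (List.isChain_cons.mp h2).1 y rfl
        omega
    obtain ⟨ih1, ih2, ih3, ih4, ih5, ih6⟩ := ih (c + (x + c) % 2) h2r hcr
    have hchain : List.Chain' (· < ·) (Fb (x :: r) c) := by
      rw [Fb]
      unfold List.Chain'
      rw [List.isChain_cons]
      refine ⟨?_, ih1⟩
      intro b hb
      rw [ih6] at hb
      rcases r with _ | ⟨y, r'⟩
      · simp at hb
      · simp only [List.head?_cons, Option.map_some, Option.mem_def, Option.some.injEq] at hb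
        have := (List.isChain_cons.mp h2).1 y rfl
        omega
    have hdvd : ∀ y ∈ Fb (x :: r) c, 2 ∣ y := by
      rw [Fb]
      intro y hy
      rcases List.mem_cons.mp hy with hy | hy
      · omega
      · exact ih2 y hy
    have hsum : (Fb (x :: r) c).sum + (Ft (x :: r) c).sum + c * (x :: r).length
        = (x :: r).sum := by
      rw [Fb, Ft]
      simp only [List.sum_cons, List.sum_append, List.length_cons]
      have e2 : c * (r.length + 1) = c * r.length + c := by ring
      rcases Nat.mod_two_eq_zero_or_one (x + c) with hpar | hpar
      · rw [hpar] at ih3 ⊢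
        simp at ih3 ⊢
        omega
      · rw [hpar] at ih3 ⊢
        simp at ih3 ⊢
        have e1 : (c + 1) * r.length = c * r.length + r.length := by ring
        have e3 : c * (r.length + 1) = c * r.length + c := by ring
        omega
    have htchain : List.Chain' (· > ·) (Ft (x :: r) c) := by
      rw [Ft]
      rcases Nat.mod_two_eq_zero_or_one (x + c) with hpar | hpar
      · rw [hpar] at ih4 ⊢
        simpa using ih4
      · rw [hpar] at ih4 ih5 ⊢
        simp only [if_true, reduceIte, List.singleton_append]
        unfold List.Chain'
        rw [List.isChain_cons]
        refine ⟨?_, ih4⟩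
        intro b hb
        have := (ih5 b (List.mem_of_mem_head? hb)).2
        omega
    have htmem : ∀ j ∈ Ft (x :: r) c, 1 ≤ j ∧ j ≤ (x :: r).length := by
      rw [Ft]
      intro j hj
      rw [List.mem_append] at hj
      simp only [List.length_cons]
      rcases hj with hj | hj
      · rcases Nat.mod_two_eq_zero_or_one (x + c) with h | h <;> simp [h] at hj
        omega
      · have := ih5 j hj
        omega
    exact ⟨hchain, hdvd, hsum, htchain, htmem, by simp [Fb]⟩


lemma rt1 (l : List ℕ) (c : ℕ) (T : Multiset ℕ) (h2 : Chain2 l) (hc : ∀ x ∈ l.head?, c ≤ x)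
    (hT : ∀ j, 1 ≤ j → j ≤ l.length → (j ∈ T ↔ j ∈ Ft l c)) :
    Gf (Fb l c) T c = l := by
  induction l generalizing c with
  | nil => simp [Fb, Gf]
  | cons x r ih =>
    have hcx : c ≤ x := hc x rfl
    have h2r : Chain2 r := h2.tail
    have hcr : ∀ z ∈ r.head?, c + (x + c) % 2 ≤ z := by
      intro z hz
      rcases r with _ | ⟨y, r'⟩
      · simp at hz
      · simp only [List.head?_cons, Option.mem_def, Option.some.injEq] at hz
        have := (List.isChain_cons.mp h2).1 y rfl
        omega
    have hft := (fspec r (c + (x + c) % 2) h2r hcr).2.2.2.2.1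
    have hnotft : (r.length + 1) ∉ Ft r (c + (x + c) % 2) := by
      intro hmem
      have := (hft _ hmem).2
      omega
    have hmemT : ((r.length + 1) ∈ T) ↔ (x + c) % 2 = 1 := by
      rw [hT (r.length + 1) (by omega) (by simp)]
      rw [Ft, List.mem_append]
      constructor
      · rintro (hj | hj)
        · rcases Nat.mod_two_eq_zero_or_one (x + c) with h | h <;> simp [h] at hj ⊢
        · exact absurd hj hnotft
      · intro h
        simp [h]
    rw [Fb, Gf]
    have hlen : (Fb r (c + (x + c) % 2)).length = r.length := fb_length _ _
    rw [hlen]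
    have ht' : (if (r.length + 1) ∈ T then 1 else 0) = (x + c) % 2 := by
      by_cases h : (r.length + 1) ∈ T
      · simp only [if_pos h]
        exact ((hmemT.mp h)).symm
      · simp only [if_neg h]
        rcases Nat.mod_two_eq_zero_or_one (x + c) with hp | hp
        · omega
        · exact absurd (hmemT.mpr hp) h
    rw [ht']
    congr 1
    · omega
    · exact ih (c + (x + c) % 2) h2r hcr (by
        intro j hj1 hj2
        rw [hT j hj1 (by simp; omega)]
        rw [Ft, List.mem_append]
        constructor
        · rintro (hj | hj)
          · rcases Nat.mod_two_eq_zero_or_one (x + c) with h | h <;> simp [h] at hj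
            omega
          · exact hj
        · intro h
          exact Or.inr h)

lemma rt2 (b : List ℕ) (T : Multiset ℕ) (c : ℕ) (he : ∀ y ∈ b, 2 ∣ y) :
    Fb (Gf b T c) c = b ∧
      ∀ j, (j ∈ Ft (Gf b T c) c ↔ j ∈ T ∧ 1 ≤ j ∧ j ≤ b.length) := by
  induction b generalizing c with
  | nil =>
    refine ⟨rfl, fun j => ?_⟩
    show j ∈ Ft [] c ↔ _
    rw [Ft]
    simp only [List.not_mem_nil, false_iff, List.length_nil]
    omega
  | cons y r ih =>
    have hey : 2 ∣ y := he y (by simp)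
    have her : ∀ z ∈ r, 2 ∣ z := fun z hz => he z (by simp [hz])
    by_cases h : (r.length + 1) ∈ T
    · obtain ⟨ih1, ih2⟩ := ih (c + 1) her
      rw [Gf]
      simp only [if_pos h]
      have hpar : (y + c + 1 + c) % 2 = 1 := by omega
      constructor
      · rw [Fb, hpar, show y + c + 1 - (c + 1) = y from by omega, ih1]
      · intro j
        rw [Ft, hpar, if_pos rfl, gf_length, List.singleton_append, List.mem_cons, ih2 j]
        simp only [List.length_cons]
        constructor
        · rintro (hj | hj)
          · subst hj; exact ⟨h, by omega, by omega⟩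
          · exact ⟨hj.1, hj.2.1, by omega⟩
        · rintro ⟨hjT, hj1, hj2⟩
          rcases Nat.lt_or_ge j (r.length + 1) with hlt | hge
          · exact Or.inr ⟨hjT, hj1, by omega⟩
          · exact Or.inl (by omega)
    · obtain ⟨ih0, ih2⟩ := ih c her
      have ih1 : Fb (Gf r T (c + 0)) (c + 0) = r := by simpa using ih0
      have ih2' : ∀ j, j ∈ Ft (Gf r T (c + 0)) (c + 0) ↔ j ∈ T ∧ 1 ≤ j ∧ j ≤ r.length := by
        simpa using ih2
      rw [Gf]
      simp only [if_neg h]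
      have hpar : (y + c + 0 + c) % 2 = 0 := by omega
      constructor
      · rw [Fb, hpar, show y + c + 0 - (c + 0) = y from by omega, ih1]
      · intro j
        rw [Ft, hpar, if_neg (by omega : ¬ (0:ℕ) = 1), List.nil_append, ih2' j]
        simp only [List.length_cons]
        constructor
        · rintro ⟨hjT, hj1, hj2⟩
          exact ⟨hjT, hj1, by omega⟩
        · rintro ⟨hjT, hj1, hj2⟩
          refine ⟨hjT, hj1, ?_⟩
          rcases Nat.lt_or_ge j (r.length + 1) with hlt | hlt
          · omega
          · exfalso
            have hje : j = r.length + 1 := by omega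
            rw [hje] at hjT
            exact h hjT

lemma gfspec (b : List ℕ) (T : Multiset ℕ) (c : ℕ) (h2 : Chain2 b) :
    Chain2 (Gf b T c) ∧
      (∀ z ∈ (Gf b T c).head?, ∀ y ∈ b.head?, y + c ≤ z ∧ z ≤ y + c + 1) ∧
      (∀ x ∈ Gf b T c, ∃ y ∈ b, y ≤ x) := by
  induction b generalizing c with
  | nil => simp [Gf, List.isChain_nil, List.Chain']
  | cons y r ih =>
    obtain ⟨t, ht1, hgf⟩ : ∃ t, t ≤ 1 ∧ Gf (y :: r) T c = (y + c + t) :: Gf r T (c + t) := by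
      by_cases h : (r.length + 1) ∈ T
      · exact ⟨1, by omega, by rw [Gf, if_pos h]⟩
      · exact ⟨0, by omega, by rw [Gf, if_neg h]⟩
    obtain ⟨ih1, ih2, ih3⟩ := ih (c + t) h2.tail
    rw [hgf]
    refine ⟨?_, ?_, ?_⟩
    · refine List.isChain_cons.mpr ⟨?_, ih1⟩
      intro z hz
      rcases r with _ | ⟨y₂, r'⟩
      · simp [Gf] at hz
      · have h12 := ih2 z hz y₂ rfl
        have := (List.isChain_cons.mp h2).1 y₂ rfl
        omega
    · intro z hz w hw
      simp only [List.head?_cons, Option.mem_def, Option.some.injEq] at hz hw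
      omega
    · intro x hx
      rcases List.mem_cons.mp hx with hx | hx
      · exact ⟨y, by simp, by omega⟩
      · obtain ⟨y₂, hy₂, hle⟩ := ih3 x hx
        exact ⟨y₂, by simp [hy₂], hle⟩

lemma sort_coe (l : List ℕ) (h : l.Pairwise (· ≤ ·)) :
    Multiset.sort (↑l : Multiset ℕ) (· ≤ ·) = l :=
  List.Perm.eq_of_pairwise' (Multiset.pairwise_sort _ _) h
    (Multiset.coe_eq_coe.mp (Multiset.sort_eq _ _))

lemma chain2_sorted {l : List ℕ} (h : Chain2 l) : l.Pairwise (· ≤ ·) :=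
  List.isChain_iff_pairwise.mp (h.imp (fun hab => by omega))

lemma chainlt_sorted {l : List ℕ} (h : List.Chain' (· < ·) l) : l.Pairwise (· ≤ ·) :=
  List.isChain_iff_pairwise.mp (h.imp (fun hab => by omega))

lemma chainlt_nodup {l : List ℕ} (h : List.Chain' (· < ·) l) : l.Nodup :=
  (List.isChain_iff_pairwise.mp h).imp (fun hab => by omega)

lemma chaingt_nodup {l : List ℕ} (h : List.Chain' (· > ·) l) : l.Nodup :=
  (List.isChain_iff_pairwise.mp h).imp (fun hab => by omega)

lemma chainlt_cases (B : List ℕ) (h : List.Chain' (· < ·) B) :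
    ((∀ x ∈ B, 0 < x) ∧ Multiset.filter (fun x => 0 < x) (↑B : Multiset ℕ) = ↑B) ∨
    (∃ r, B = 0 :: r ∧ (∀ x ∈ r, 0 < x) ∧
      Multiset.filter (fun x => 0 < x) (↑B : Multiset ℕ) = ↑r) := by
  rcases B with _ | ⟨b, r⟩
  · left
    constructor
    · intro x hx; simp at hx
    · simp
  · have hpw := List.isChain_iff_pairwise.mp h
    have hrpos : ∀ x ∈ r, b < x := (List.pairwise_cons.mp hpw).1
    rcases Nat.eq_zero_or_pos b with hb | hb
    · right
      refine ⟨r, by rw [hb], fun x hx => by have := hrpos x hx; omega, ?_⟩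
      rw [hb, ← Multiset.cons_coe, Multiset.filter_cons_of_neg _ (by omega)]
      rw [Multiset.filter_eq_self.mpr]
      intro a ha
      rw [Multiset.mem_coe] at ha
      have := hrpos a ha
      omega
    · left
      constructor
      · intro x hx
        rcases List.mem_cons.mp hx with hx | hx
        · omega
        · have := hrpos x hx; omega
      · rw [Multiset.filter_eq_self.mpr]
        intro a ha
        rw [Multiset.mem_coe] at ha
        rcases List.mem_cons.mp ha with ha | ha
        · omega
        · have := hrpos a ha; omega



lemma filter_pos_sum (s : Multiset ℕ) :
    (Multiset.filter (fun x => 0 < x) s).sum = s.sum := by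
  conv_rhs => rw [← Multiset.filter_add_not (fun x => 0 < x) s]
  rw [Multiset.sum_add]
  have hz : (Multiset.filter (fun a => ¬ 0 < a) s).sum = 0 := by
    apply Multiset.sum_eq_zero
    intro x hx
    have := (Multiset.mem_filter.mp hx).2
    omega
  omega

lemma sorted_nodup_even_chain2 {lb : List ℕ} (hs : lb.Pairwise (· ≤ ·)) (hn : lb.Nodup)
    (he : ∀ x ∈ lb, 2 ∣ x) : Chain2 lb := by
  refine List.isChain_iff_pairwise.mpr ?_
  refine List.Pairwise.imp_of_mem ?_ (hs.and hn)
  intro a b ha hb hab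
  have h1 := he a ha
  have h2 := he b hb
  obtain ⟨h3, h4⟩ := hab
  omega

abbrev P (n : ℕ) (t : ℕ × Multiset ℕ × Multiset ℕ) : Prop :=
  (∀ x ∈ t.2.1, 0 < x) ∧
    List.Chain' (fun a b => a + 2 ≤ b) (Multiset.sort t.2.1 (· ≤ ·)) ∧
    (Multiset.card t.2.1 = 2 * t.1 ∨
      (Multiset.card t.2.1 + 1 = 2 * t.1 ∧ ∀ x ∈ t.2.1, 2 ≤ x)) ∧
    (∀ x ∈ t.2.2, 2 * t.1 + 1 ≤ x) ∧ t.2.2.Nodup ∧ t.2.1.sum + t.2.2.sum = n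

abbrev Q (n : ℕ) (p : Multiset ℕ × Multiset ℕ) : Prop :=
  (∀ x ∈ p.1, 0 < x ∧ 2 ∣ x) ∧ p.1.Nodup ∧
    (∀ x ∈ p.2, 0 < x) ∧ p.2.Nodup ∧ p.1.sum + p.2.sum = n

def rawF (t : ℕ × Multiset ℕ × Multiset ℕ) : Multiset ℕ × Multiset ℕ :=
  (Multiset.filter (fun x => 0 < x) ↑(Fb (Multiset.sort t.2.1 (· ≤ ·)) 0),
    (↑(Ft (Multiset.sort t.2.1 (· ≤ ·)) 0) : Multiset ℕ) + t.2.2)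

def rawG (p : Multiset ℕ × Multiset ℕ) : ℕ × Multiset ℕ × Multiset ℕ :=
  ((Multiset.card p.1 + 1) / 2,
    Multiset.filter (fun x => 0 < x)
      ↑(Gf (if Multiset.card p.1 % 2 = 1 then 0 :: Multiset.sort p.1 (· ≤ ·)
            else Multiset.sort p.1 (· ≤ ·)) p.2 0),
    Multiset.filter (fun x => 2 * ((Multiset.card p.1 + 1) / 2) < x) p.2)

lemma hF {n : ℕ} {t : ℕ × Multiset ℕ × Multiset ℕ} (h : P n t) : Q n (rawF t) := by
  obtain ⟨i, s, M⟩ := t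
  obtain ⟨h1, h2, h3, h4, h5, h6⟩ := h
  simp only at h1 h2 h3 h4 h5 h6 ⊢
  set l := Multiset.sort s (· ≤ ·) with hl
  obtain ⟨F1, F2, F3, F4, F5, F6⟩ := fspec l 0 h2 (fun x _ => Nat.zero_le x)
  have hlen : l.length ≤ 2 * i := by
    rw [hl, Multiset.length_sort]
    rcases h3 with h3 | h3
    · omega
    · omega
  constructor
  · intro x hx
    rw [rawF] at hx
    simp only [Multiset.mem_filter, Multiset.mem_coe] at hx
    exact ⟨hx.2, F2 x hx.1⟩
  refine ⟨?_, ?_, ?_, ?_⟩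
  · exact Multiset.Nodup.filter _ (Multiset.coe_nodup.mpr (chainlt_nodup F1))
  · intro x hx
    rw [rawF] at hx
    simp only [Multiset.mem_add, Multiset.mem_coe] at hx
    rcases hx with hx | hx
    · exact (F5 x hx).1
    · have := h4 x hx
      omega
  · rw [rawF]
    simp only [Multiset.nodup_add]
    refine ⟨Multiset.coe_nodup.mpr (chaingt_nodup F4), h5, ?_⟩
    rw [Multiset.disjoint_left]
    intro a ha hM
    rw [Multiset.mem_coe] at ha
    have := (F5 a ha).2
    have := h4 a hM
    omega
  · rw [rawF]
    simp only [Multiset.sum_add]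
    rw [← hl, filter_pos_sum, Multiset.sum_coe, Multiset.sum_coe]
    have hsl : l.sum = s.sum := by
      conv_rhs => rw [← Multiset.sort_eq s (· ≤ ·), ← hl]
      rw [Multiset.sum_coe]
    omega

lemma hG {n : ℕ} {p : Multiset ℕ × Multiset ℕ} (h : Q n p) : P n (rawG p) := by
  obtain ⟨b, g⟩ := p
  obtain ⟨g1, g2, g3, g4, g5⟩ := h
  simp only at g1 g2 g3 g4 g5 ⊢
  set m := Multiset.card b with hm
  set i := (m + 1) / 2 with hi
  set lb := Multiset.sort b (· ≤ ·) with hlb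
  set l₀ := if m % 2 = 1 then 0 :: lb else lb with hl₀
  have hlbsum : lb.sum = b.sum := by
    conv_rhs => rw [← Multiset.sort_eq b (· ≤ ·), ← hlb]
    rw [Multiset.sum_coe]
  have hlbmem : ∀ x ∈ lb, x ∈ b := by
    intro x hx
    rw [hlb, Multiset.mem_sort] at hx
    exact hx
  have hlbe : ∀ x ∈ lb, 2 ∣ x := fun x hx => (g1 x (hlbmem x hx)).2
  have hlbpos : ∀ x ∈ lb, 0 < x := fun x hx => (g1 x (hlbmem x hx)).1
  have hlbnd : lb.Nodup := by
    rw [← Multiset.coe_nodup, hlb, Multiset.sort_eq]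
    exact g2
  have hlbc2 : Chain2 lb := sorted_nodup_even_chain2 (Multiset.pairwise_sort _ _) hlbnd hlbe
  have hlblen : lb.length = m := by rw [hlb, hm, Multiset.length_sort]
  have hl₀c2 : Chain2 l₀ := by
    rw [hl₀]
    split
    · refine List.isChain_cons.mpr ⟨?_, hlbc2⟩
      intro z hz
      have hzmem := List.mem_of_mem_head? hz
      have := hlbpos z hzmem
      have := hlbe z hzmem
      omega
    · exact hlbc2
  have hl₀e : ∀ x ∈ l₀, 2 ∣ x := by
    rw [hl₀]
    split
    · intro x hx
      rcases List.mem_cons.mp hx with hx | hx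
      · omega
      · exact hlbe x hx
    · exact hlbe
  have hl₀len : l₀.length = 2 * i := by
    rw [hl₀, hi]
    split <;> simp only [List.length_cons, hlblen] <;> omega
  have hl₀sum : l₀.sum = b.sum := by
    rw [hl₀]
    split
    · simp [hlbsum]
    · exact hlbsum
  set L := Gf l₀ g 0 with hL
  obtain ⟨G1, G2, G3⟩ := gfspec l₀ g 0 hl₀c2
  rw [← hL] at G1 G2 G3
  obtain ⟨R1, R2⟩ := rt2 l₀ g 0 hl₀e
  rw [← hL] at R1 R2
  obtain ⟨F1, F2, F3, F4, F5, F6⟩ := fspec L 0 G1 (fun x _ => Nat.zero_le x)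
  have hLlt : List.Chain' (· < ·) L := G1.imp (fun hab => by omega)
  have hLsum : L.sum = b.sum + (Ft L 0).sum := by
    rw [R1] at F3
    omega
  have hTmem : ∀ j, j ∈ Ft L 0 ↔ j ∈ g ∧ ¬ 2 * i < j := by
    intro j
    rw [R2 j, hl₀len]
    constructor
    · rintro ⟨hj, _, hj2⟩
      exact ⟨hj, by omega⟩
    · rintro ⟨hj, hj2⟩
      have := g3 j hj
      exact ⟨hj, by omega, by omega⟩
  have hTcoe : (↑(Ft L 0) : Multiset ℕ) = Multiset.filter (fun x => ¬ 2 * i < x) g := by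
    rw [Multiset.Nodup.ext (Multiset.coe_nodup.mpr (chaingt_nodup F4))
      (Multiset.Nodup.filter _ g4)]
    intro a
    rw [Multiset.mem_coe, Multiset.mem_filter, hTmem a]
  rcases chainlt_cases L hLlt with ⟨hpos, hfil⟩ | ⟨L', hL', hpos, hfil⟩
  · -- all entries of L positive
    have hsort : Multiset.sort (Multiset.filter (fun x => 0 < x) (↑L : Multiset ℕ)) (· ≤ ·)
        = L := by
      rw [hfil]
      exact sort_coe L (chain2_sorted G1)
    rw [rawG]
    dsimp only
    rw [← hm, ← hi, ← hlb, ← hl₀, ← hL, hfil]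
    refine ⟨?_, ?_, ?_, ?_, ?_, ?_⟩
    · intro x hx
      exact hpos x (Multiset.mem_coe.mp hx)
    · rw [show Multiset.sort (↑L : Multiset ℕ) (· ≤ ·) = L from sort_coe L (chain2_sorted G1)]
      exact G1
    · left
      rw [Multiset.coe_card, gf_length, hl₀len]
    · intro x hx
      have := (Multiset.mem_filter.mp hx).2
      omega
    · exact Multiset.Nodup.filter _ g4
    · dsimp only
      rw [Multiset.sum_coe, hLsum]
      have : (Multiset.filter (fun x => 2 * i < x) g).sum
          + (Multiset.filter (fun x => ¬ 2 * i < x) g).sum = g.sum := by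
        rw [← Multiset.sum_add, Multiset.filter_add_not]
      rw [← hTcoe] at this
      rw [Multiset.sum_coe] at this
      omega
  · -- L = 0 :: L'
    have hL'c2 : Chain2 L' := by
      rw [hL'] at G1
      exact G1.tail
    have hL'ge2 : ∀ x ∈ L', 2 ≤ x := by
      rw [hL'] at G1
      have hpw := List.isChain_iff_pairwise.mp G1
      intro x hx
      have := (List.pairwise_cons.mp hpw).1 x hx
      omega
    have hsort : Multiset.sort (↑L' : Multiset ℕ) (· ≤ ·) = L' :=
      sort_coe L' (chain2_sorted hL'c2)
    rw [rawG]
    dsimp only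
    rw [← hm, ← hi, ← hlb, ← hl₀, ← hL, hfil]
    refine ⟨?_, ?_, ?_, ?_, ?_, ?_⟩
    · intro x hx
      exact hpos x (Multiset.mem_coe.mp hx)
    · rw [hsort]
      exact hL'c2
    · right
      constructor
      · rw [Multiset.coe_card]
        have : L.length = 2 * i := by rw [hL, gf_length, hl₀len]
        rw [hL'] at this
        simp only [List.length_cons] at this
        omega
      · intro x hx
        exact hL'ge2 x (Multiset.mem_coe.mp hx)
    · intro x hx
      have := (Multiset.mem_filter.mp hx).2
      omega
    · exact Multiset.Nodup.filter _ g4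
    · dsimp only
      rw [Multiset.sum_coe]
      have hLsum' : L.sum = L'.sum := by rw [hL']; simp
      rw [← hLsum', hLsum]
      have : (Multiset.filter (fun x => 2 * i < x) g).sum
          + (Multiset.filter (fun x => ¬ 2 * i < x) g).sum = g.sum := by
        rw [← Multiset.sum_add, Multiset.filter_add_not]
      rw [← hTcoe] at this
      rw [Multiset.sum_coe] at this
      omega



lemma left_inv {n : ℕ} {t : ℕ × Multiset ℕ × Multiset ℕ} (h : P n t) : rawG (rawF t) = t := by
  obtain ⟨i, s, M⟩ := t
  obtain ⟨h1, h2, h3, h4, h5, h6⟩ := h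
  simp only at h1 h2 h3 h4 h5 h6
  set l := Multiset.sort s (· ≤ ·) with hl
  have hcoel : (↑l : Multiset ℕ) = s := by rw [hl, Multiset.sort_eq]
  have hlpos : ∀ x ∈ l, 0 < x := by
    intro x hx
    exact h1 x (by rw [← hcoel]; exact Multiset.mem_coe.mpr hx)
  have hllen : l.length = Multiset.card s := by rw [hl, Multiset.length_sort]
  have hlen2i : l.length ≤ 2 * i := by rcases h3 with h3 | ⟨h3, _⟩ <;> omega
  obtain ⟨F1, F2, F3, F4, F5, F6⟩ := fspec l 0 h2 (fun x _ => Nat.zero_le x)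
  set B := Fb l 0 with hB
  set T := Ft l 0 with hT
  have hBlen : B.length = l.length := by rw [hB, fb_length]
  have hγmem : ∀ j, 1 ≤ j → j ≤ l.length → (j ∈ ((↑T + M) : Multiset ℕ) ↔ j ∈ Ft l 0) := by
    intro j hj1 hj2
    rw [Multiset.mem_add, Multiset.mem_coe, ← hT]
    constructor
    · rintro (hj | hj)
      · exact hj
      · have := h4 j hj
        omega
    · exact Or.inl
  have hGfB : Gf B (↑T + M) 0 = l := rt1 l 0 (↑T + M) h2 (fun x _ => Nat.zero_le x) hγmem
  have hμ : Multiset.filter (fun x => 2 * i < x) (↑T + M) = M := by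
    rw [Multiset.filter_add]
    rw [Multiset.filter_eq_nil.mpr, Multiset.filter_eq_self.mpr, zero_add]
    · intro a ha
      have := h4 a ha
      omega
    · intro a ha
      rw [Multiset.mem_coe] at ha
      have := (F5 a ha).2
      omega
  have hfl : Multiset.filter (fun x => 0 < x) (↑l : Multiset ℕ) = s := by
    rw [Multiset.filter_eq_self.mpr, hcoel]
    intro a ha
    exact hlpos a (Multiset.mem_coe.mp ha)
  have hrawF : rawF (i, s, M) = (Multiset.filter (fun x => 0 < x) ↑B, ↑T + M) := by
    rw [rawF]
  rw [hrawF, rawG]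
  dsimp only
  simp only [Prod.mk.injEq]
  rcases chainlt_cases B F1 with ⟨hApos, hAfil⟩ | ⟨rB, hBeq, hBpos, hBfil⟩
  · -- B has no zero entry
    have hcardβ : Multiset.card (Multiset.filter (fun x => 0 < x) (↑B : Multiset ℕ))
        = l.length := by rw [hAfil, Multiset.coe_card, hBlen]
    rcases h3 with h3 | ⟨h3, hge2⟩
    · -- card s = 2 i
      have hm2i : Multiset.card (Multiset.filter (fun x => 0 < x) (↑B : Multiset ℕ))
          = 2 * i := by omega
      simp only [hm2i]
      rw [if_neg (by omega : ¬ (2 * i) % 2 = 1)]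
      rw [hAfil, show Multiset.sort (↑B : Multiset ℕ) (· ≤ ·) = B from
        sort_coe B (chainlt_sorted F1)]
      rw [hGfB]
      refine ⟨by omega, hfl, ?_⟩
      rw [show (2 * i + 1) / 2 = i from by omega, hμ]
    · -- card s + 1 = 2 i
      have hm : Multiset.card (Multiset.filter (fun x => 0 < x) (↑B : Multiset ℕ)) + 1
          = 2 * i := by omega
      simp only [show Multiset.card (Multiset.filter (fun x => 0 < x) (↑B : Multiset ℕ))
          = 2 * i - 1 from by omega]
      rw [if_pos (by omega : (2 * i - 1) % 2 = 1)]
      rw [hAfil, show Multiset.sort (↑B : Multiset ℕ) (· ≤ ·) = B from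
        sort_coe B (chainlt_sorted F1)]
      have hnot : (B.length + 1) ∉ ((↑T + M) : Multiset ℕ) := by
        rw [Multiset.mem_add, Multiset.mem_coe]
        rintro (hj | hj)
        · have := (F5 _ hj).2
          omega
        · have := h4 _ hj
          omega
      have hGf0 : Gf (0 :: B) (↑T + M) 0 = 0 :: l := by
        rw [Gf, if_neg hnot]
        simp only [Nat.add_zero, Nat.zero_add]
        rw [hGfB]
      rw [hGf0]
      refine ⟨by omega, ?_, ?_⟩
      · rw [← Multiset.cons_coe, Multiset.filter_cons_of_neg _ (by omega), hfl]
      · rw [show (2 * i - 1 + 1) / 2 = i from by omega, hμ]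
  · -- B = 0 :: rB
    have hBhd : B.head? = some 0 := by rw [hBeq]; rfl
    have hx₁ : ∃ x₁, l.head? = some x₁ ∧ x₁ ≤ 1 := by
      rw [F6] at hBhd
      rcases l with _ | ⟨x₁, l'⟩
      · simp at hBhd
      · simp only [List.head?_cons, Option.map_some, Option.some.injEq] at hBhd
        exact ⟨x₁, rfl, by omega⟩
    obtain ⟨x₁, hx₁h, hx₁le⟩ := hx₁
    have hx₁mem : x₁ ∈ l := List.mem_of_mem_head? hx₁h
    have hx₁pos : 0 < x₁ := hlpos x₁ hx₁mem
    rcases h3 with h3 | ⟨h3, hge2⟩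
    · -- card s = 2 i, B = 0 :: rB
      have hlen : l.length = 2 * i := by omega
      have hlenpos : 0 < l.length := by
        rcases l with _ | _
        · simp at hx₁h
        · simp
      have hcardβ : Multiset.card (Multiset.filter (fun x => 0 < x) (↑B : Multiset ℕ))
          = 2 * i - 1 := by
        rw [hBfil, Multiset.coe_card]
        have : B.length = rB.length + 1 := by rw [hBeq]; rfl
        omega
      simp only [hcardβ]
      rw [if_pos (by omega : (2 * i - 1) % 2 = 1)]
      rw [hBfil, show Multiset.sort (↑rB : Multiset ℕ) (· ≤ ·) = rB from
        sort_coe rB (chainlt_sorted (by rw [hBeq] at F1; exact F1.tail))]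
      rw [show (0 :: rB) = B from (hBeq).symm, hGfB]
      exact ⟨by omega, hfl, by rw [show (2 * i - 1 + 1) / 2 = i from by omega, hμ]⟩
    · -- contradiction: parts ≥ 2
      exfalso
      have : 2 ≤ x₁ := hge2 x₁ (by rw [← hcoel]; exact Multiset.mem_coe.mpr hx₁mem)
      omega

lemma right_inv {n : ℕ} {p : Multiset ℕ × Multiset ℕ} (h : Q n p) : rawF (rawG p) = p := by
  obtain ⟨b, g⟩ := p
  obtain ⟨g1, g2, g3, g4, g5⟩ := h
  simp only at g1 g2 g3 g4 g5
  set m := Multiset.card b with hm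
  set i := (m + 1) / 2 with hi
  set lb := Multiset.sort b (· ≤ ·) with hlb
  set l₀ := if m % 2 = 1 then 0 :: lb else lb with hl₀
  have hcoelb : (↑lb : Multiset ℕ) = b := by rw [hlb, Multiset.sort_eq]
  have hlbmem : ∀ x ∈ lb, x ∈ b := by
    intro x hx
    rw [← hcoelb]
    exact Multiset.mem_coe.mpr hx
  have hlbe : ∀ x ∈ lb, 2 ∣ x := fun x hx => (g1 x (hlbmem x hx)).2
  have hlbpos : ∀ x ∈ lb, 0 < x := fun x hx => (g1 x (hlbmem x hx)).1
  have hlbnd : lb.Nodup := by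
    rw [← Multiset.coe_nodup, hcoelb]
    exact g2
  have hlbc2 : Chain2 lb := sorted_nodup_even_chain2 (Multiset.pairwise_sort _ _) hlbnd hlbe
  have hlblen : lb.length = m := by rw [hlb, hm, Multiset.length_sort]
  have hl₀c2 : Chain2 l₀ := by
    rw [hl₀]
    split
    · refine List.isChain_cons.mpr ⟨?_, hlbc2⟩
      intro z hz
      have hzmem := List.mem_of_mem_head? hz
      have := hlbpos z hzmem
      have := hlbe z hzmem
      omega
    · exact hlbc2
  have hl₀e : ∀ x ∈ l₀, 2 ∣ x := by
    rw [hl₀]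
    split
    · intro x hx
      rcases List.mem_cons.mp hx with hx | hx
      · omega
      · exact hlbe x hx
    · exact hlbe
  have hl₀len : l₀.length = 2 * i := by
    rw [hl₀, hi]
    split <;> simp only [List.length_cons, hlblen] <;> omega
  set L := Gf l₀ g 0 with hL
  obtain ⟨G1, G2, G3⟩ := gfspec l₀ g 0 hl₀c2
  rw [← hL] at G1 G2 G3
  obtain ⟨R1, R2⟩ := rt2 l₀ g 0 hl₀e
  rw [← hL] at R1 R2
  obtain ⟨F1, F2, F3, F4, F5, F6⟩ := fspec L 0 G1 (fun x _ => Nat.zero_le x)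
  have hLlt : List.Chain' (· < ·) L := G1.imp (fun hab => by omega)
  have hTmem : ∀ j, j ∈ Ft L 0 ↔ j ∈ g ∧ ¬ 2 * i < j := by
    intro j
    rw [R2 j, hl₀len]
    constructor
    · rintro ⟨hj, _, hj2⟩
      exact ⟨hj, by omega⟩
    · rintro ⟨hj, hj2⟩
      have := g3 j hj
      exact ⟨hj, by omega, by omega⟩
  have hTcoe : (↑(Ft L 0) : Multiset ℕ) = Multiset.filter (fun x => ¬ 2 * i < x) g := by
    rw [Multiset.Nodup.ext (Multiset.coe_nodup.mpr (chaingt_nodup F4))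
      (Multiset.Nodup.filter _ g4)]
    intro a
    rw [Multiset.mem_coe, Multiset.mem_filter, hTmem a]
  have hμγ : (↑(Ft L 0) : Multiset ℕ) + Multiset.filter (fun x => 2 * i < x) g = g := by
    rw [hTcoe, add_comm, Multiset.filter_add_not]
  have hfilb : Multiset.filter (fun x => 0 < x) (↑l₀ : Multiset ℕ) = b := by
    rw [hl₀]
    split
    · rw [← Multiset.cons_coe, Multiset.filter_cons_of_neg _ (by omega)]
      rw [Multiset.filter_eq_self.mpr, hcoelb]
      intro a ha
      exact hlbpos a (Multiset.mem_coe.mp ha)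
    · rw [Multiset.filter_eq_self.mpr, hcoelb]
      intro a ha
      exact hlbpos a (Multiset.mem_coe.mp ha)
  have hrawG : rawG (b, g) = (i, Multiset.filter (fun x => 0 < x) ↑L,
      Multiset.filter (fun x => 2 * i < x) g) := by
    rw [rawG]
  rw [hrawG, rawF]
  dsimp only
  simp only [Prod.mk.injEq]
  rcases chainlt_cases L hLlt with ⟨hApos, hAfil⟩ | ⟨L', hLeq, hLpos, hLfil⟩
  · rw [hAfil, show Multiset.sort (↑L : Multiset ℕ) (· ≤ ·) = L from
      sort_coe L (chain2_sorted G1)]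
    rw [R1]
    exact ⟨hfilb, hμγ⟩
  · -- L = 0 :: L'
    have hm2 : m % 2 = 1 := by
      by_contra hm2
      have hl₀lb : l₀ = lb := by rw [hl₀, if_neg hm2]
      have hLhd : L.head? = some 0 := by rw [hLeq]; rfl
      rcases lb with _ | ⟨y, lb'⟩
      · have : L.length = 0 := by rw [hL, gf_length, hl₀lb]; rfl
        rw [hLeq] at this
        simp at this
      · have := G2 0 (by rw [hLhd]; rfl) y (by rw [hl₀lb]; rfl)
        have := hlbpos y (by simp)
        omega
    have hl₀eq : l₀ = 0 :: lb := by rw [hl₀, if_pos hm2]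
    rw [hLeq] at R1
    rw [Fb] at R1
    simp only [Nat.add_zero, Nat.zero_mod, Nat.zero_add] at R1
    rw [hl₀eq] at R1
    have hFbL' : Fb L' 0 = lb := by
      have := List.cons.injEq _ _ _ _ ▸ R1
      rw [List.cons.injEq] at R1
      exact R1.2
    have hFtL' : Ft L' 0 = Ft L 0 := by
      conv_rhs => rw [hLeq, Ft]
      simp only [Nat.add_zero, Nat.zero_mod, Nat.zero_add]
      rw [if_neg (by omega : ¬ (0:ℕ) = 1), List.nil_append]
    have hL'c2 : Chain2 L' := by
      rw [hLeq] at G1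
      exact G1.tail
    rw [hLfil, show Multiset.sort (↑L' : Multiset ℕ) (· ≤ ·) = L' from
      sort_coe L' (chain2_sorted hL'c2)]
    rw [hFbL', hFtL']
    constructor
    · rw [Multiset.filter_eq_self.mpr, hcoelb]
      intro a ha
      exact hlbpos a (Multiset.mem_coe.mp ha)
    · exact hμγ


end Stmt19

theorem stmt_19 (n : ℕ) :
    Nat.card {t : ℕ × Multiset ℕ × Multiset ℕ //
        (∀ x ∈ t.2.1, 0 < x) ∧
        List.Chain' (fun a b => a + 2 ≤ b) (Multiset.sort t.2.1 (· ≤ ·)) ∧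
        (Multiset.card t.2.1 = 2 * t.1 ∨
          (Multiset.card t.2.1 + 1 = 2 * t.1 ∧ ∀ x ∈ t.2.1, 2 ≤ x)) ∧
        (∀ x ∈ t.2.2, 2 * t.1 + 1 ≤ x) ∧ t.2.2.Nodup ∧
        t.2.1.sum + t.2.2.sum = n}
      = Nat.card {p : Multiset ℕ × Multiset ℕ //
          (∀ x ∈ p.1, 0 < x ∧ 2 ∣ x) ∧ p.1.Nodup ∧
          (∀ x ∈ p.2, 0 < x) ∧ p.2.Nodup ∧
          p.1.sum + p.2.sum = n} := by
  exact Nat.card_congr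
    { toFun := fun x => ⟨Stmt19.rawF x.1, Stmt19.hF x.2⟩
      invFun := fun y => ⟨Stmt19.rawG y.1, Stmt19.hG y.2⟩
      left_inv := fun x => Subtype.ext (Stmt19.left_inv x.2)
      right_inv := fun y => Subtype.ext (Stmt19.right_inv y.2) }
end
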